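/- arXiv:1504.04654 — 8 statements merged into one kernel-verified Lean document; each statement's English description precedes it below -/
import Mathlib

section
/- Let N ≥ 1 be an integer, let ε > 0 and let r₁, …, r_N > 0. Then there exists a finite subset S of the solid ellipsoid E(r) = { a ∈ ℝᴺ : Σₙ₌₁ᴺ aₙ²/rₙ² ≤ 1 } such that any two distinct points of S are at Euclidean distance at least 2ε and the cardinality of S satisfies |S| ≥ (Πₙ₌₁ᴺ rₙ)/(2ε)ᴺ. -/
open Metric Finset MeasureTheory ENNReal

/-- There exists a `2ε`-separated subset `S` of the solid ellipsoid
`{a : Σ aₙ²/rₙ² ≤ 1}` in `ℝᴺ` with `|S| ≥ (Π rₙ)/(2ε)ᴺ`. -/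
theorem capacity_lower_bound (N : ℕ) (hN : 1 ≤ N) (ε : ℝ) (hε : 0 < ε)
    (r : Fin N → ℝ) (hr : ∀ n, 0 < r n) :
    ∃ S : Finset (EuclideanSpace ℝ (Fin N)),
      (∀ a ∈ S, ∑ n, (a n) ^ 2 / (r n) ^ 2 ≤ 1) ∧
      (∀ a ∈ S, ∀ b ∈ S, a ≠ b → 2 * ε ≤ dist a b) ∧
      (∏ n, r n) / (2 * ε) ^ N ≤ (S.card : ℝ) := by
  classical
  haveI : Nonempty (Fin N) := ⟨⟨0, hN⟩⟩
  set X := EuclideanSpace ℝ (Fin N) with hX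
  let T : X →ₗ[ℝ] X := Matrix.toEuclideanLin (Matrix.diagonal r)
  have hT : ∀ (a : X) (n : Fin N), T a n = r n * a n := by
    intro a n
    exact Matrix.mulVec_diagonal r a n
  have hdet : LinearMap.det T = ∏ n, r n := by
    have : T = Matrix.toLin (PiLp.basisFun 2 ℝ (Fin N)) (PiLp.basisFun 2 ℝ (Fin N))
        (Matrix.diagonal r) := rfl
    rw [this, LinearMap.det_toLin, Matrix.det_diagonal]
  set Ell : Set X := {a | ∑ n, (a n) ^ 2 / (r n) ^ 2 ≤ 1} with hEll
  have hnorm : ∀ b : X, b ∈ closedBall (0 : X) 1 ↔ ∑ n, (b n) ^ 2 ≤ 1 := by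
    intro b
    rw [mem_closedBall_zero_iff]
    constructor
    · intro h
      have hb : ‖b‖ ^ 2 ≤ 1 := by nlinarith [norm_nonneg b]
      calc ∑ n, b n ^ 2 = ‖b‖ ^ 2 := by
            rw [EuclideanSpace.norm_eq, Real.sq_sqrt (by positivity)]
            simp [Real.norm_eq_abs, sq_abs]
        _ ≤ 1 := hb
    · intro h
      rw [EuclideanSpace.norm_eq]
      refine Real.sqrt_le_one.mpr ?_
      simpa [Real.norm_eq_abs, sq_abs] using h
  have himg : T '' closedBall (0 : X) 1 = Ell := by
    ext a
    constructor
    · rintro ⟨b, hb, rfl⟩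
      rw [hnorm] at hb
      have heq : ∀ n, (T b n) ^ 2 / (r n) ^ 2 = (b n) ^ 2 := by
        intro n
        rw [hT, mul_pow, mul_comm, mul_div_assoc, div_self (pow_ne_zero 2 (hr n).ne'),
          mul_one]
      simpa [hEll, heq] using hb
    · intro ha
      refine ⟨(WithLp.equiv 2 _).symm (fun n => a n / r n), ?_, ?_⟩
      · rw [hnorm]
        have : ∀ n : Fin N, ((WithLp.equiv 2 (Fin N → ℝ)).symm
            (fun n => a n / r n) : X) n ^ 2 = (a n) ^ 2 / (r n) ^ 2 := by
          intro n; simp [div_pow]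
        rw [Finset.sum_congr rfl fun n _ => this n]
        exact ha
      · ext n
        rw [hT]
        simp [mul_div_cancel₀ _ (hr n).ne']
  -- Ell is compact, hence bounded
  have hEllcomp : IsCompact Ell := by
    rw [← himg]
    exact (isCompact_closedBall (0 : X) 1).image T.continuous_of_finiteDimensional
  obtain ⟨R, hR⟩ := hEllcomp.isBounded.subset_closedBall (0 : X)
  -- Zorn: maximal 2ε-separated subset of Ell
  set P : Set (Set X) := {s | s ⊆ Ell ∧ s.Pairwise (fun x y => 2 * ε ≤ dist x y)} with hP
  obtain ⟨M, hM⟩ := zorn_subset P (by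
    intro c hcP hc
    refine ⟨⋃₀ c, ⟨Set.sUnion_subset fun s hs => (hcP hs).1, ?_⟩, fun s hs => Set.subset_sUnion_of_mem hs⟩
    intro x hx y hy hxy
    obtain ⟨s, hs, hxs⟩ := hx
    obtain ⟨t, ht, hyt⟩ := hy
    rcases hc.total hs ht with hst | hts
    · exact (hcP ht).2 (hst hxs) hyt hxy
    · exact (hcP hs).2 hxs (hts hyt) hxy)
  have hMsub : M ⊆ Ell := hM.prop.1
  have hMsep : M.Pairwise (fun x y => 2 * ε ≤ dist x y) := hM.prop.2
  -- maximality gives covering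
  have hcover : Ell ⊆ ⋃ x ∈ M, ball x (2 * ε) := by
    intro y hy
    by_contra hyc
    simp only [Set.mem_iUnion, mem_ball, not_exists, not_lt] at hyc
    have hyM : y ∉ M := by
      intro h
      have := hyc y h
      rw [dist_self] at this
      linarith
    have hins : insert y M ∈ P := by
      refine ⟨Set.insert_subset hy hMsub, hMsep.insert fun x hx _ => ?_⟩
      exact ⟨hyc x hx, by rw [dist_comm]; exact hyc x hx⟩
    exact hyM (hM.2 hins (Set.subset_insert y M) (Set.mem_insert y M))
  -- measure constants
  have hμB0 : (volume (ball (0 : X) 1)) ≠ 0 := (measure_ball_pos volume (0 : X) one_pos).ne'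
  have hμBtop : (volume (ball (0 : X) 1)) ≠ ⊤ := measure_ball_lt_top.ne
  -- finiteness of M
  have hc0 : volume (ball (0 : X) ε) ≠ 0 := (measure_ball_pos volume (0 : X) hε).ne'
  have hctop : volume (ball (0 : X) ε) ≠ ⊤ := measure_ball_lt_top.ne
  have hMfin : M.Finite := by
    by_contra hinf
    have hinf : M.Infinite := hinf
    set C := volume (closedBall (0 : X) (R + ε)) with hC
    have hCtop : C ≠ ⊤ := measure_closedBall_lt_top.ne
    obtain ⟨n, hn⟩ := ENNReal.exists_nat_gt
      (ENNReal.div_lt_top hCtop hc0).ne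
    obtain ⟨t, htM, htc⟩ := hinf.exists_subset_card_eq n
    have hdisj : (↑t : Set X).PairwiseDisjoint (fun x => ball x ε) := by
      intro x hx y hy hxy
      exact ball_disjoint_ball (by linarith [hMsep (htM hx) (htM hy) hxy])
    have hsub : (⋃ x ∈ t, ball x ε) ⊆ closedBall (0 : X) (R + ε) := by
      intro z hz
      simp only [Set.mem_iUnion, mem_ball] at hz
      obtain ⟨x, hx, hzx⟩ := hz
      have hx0 : dist x 0 ≤ R := hR (hMsub (htM hx))
      rw [mem_closedBall]
      calc dist z 0 ≤ dist z x + dist x 0 := dist_triangle _ _ _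
        _ ≤ R + ε := by linarith
    have hcard : (n : ℝ≥0∞) * volume (ball (0 : X) ε) ≤ C := by
      calc (n : ℝ≥0∞) * volume (ball (0 : X) ε)
          = ∑ x ∈ t, volume (ball x ε) := by
            simp [Measure.addHaar_ball_center, htc, Finset.sum_const, nsmul_eq_mul]
        _ = volume (⋃ x ∈ t, ball x ε) :=
            (measure_biUnion_finset hdisj fun x _ => measurableSet_ball).symm
        _ ≤ C := measure_mono hsub
    rw [ENNReal.div_lt_iff (Or.inl hc0) (Or.inl hctop)] at hn
    exact absurd hcard (not_le.mpr hn)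
  -- take S to be the finite maximal set
  refine ⟨hMfin.toFinset, ?_, ?_, ?_⟩
  · intro a ha
    rw [Set.Finite.mem_toFinset] at ha
    exact hMsub ha
  · intro a ha b hb hab
    rw [Set.Finite.mem_toFinset] at ha hb
    exact hMsep ha hb hab
  · -- volume comparison
    have hfr : Module.finrank ℝ X = N := finrank_euclideanSpace_fin
    have h1 : volume Ell = ENNReal.ofReal (∏ n, r n) * volume (ball (0 : X) 1) := by
      rw [← himg, Measure.addHaar_image_linearMap, hdet,
        Measure.addHaar_closedBall _ _ zero_le_one,
        abs_of_pos (Finset.prod_pos fun n _ => hr n)]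
      simp
    have h2ε : (0 : ℝ) ≤ 2 * ε := by linarith
    have h2 : volume Ell ≤ (hMfin.toFinset.card : ℝ≥0∞) *
        (ENNReal.ofReal ((2 * ε) ^ N) * volume (ball (0 : X) 1)) := by
      calc volume Ell ≤ volume (⋃ x ∈ hMfin.toFinset, ball x (2 * ε)) := by
            refine measure_mono (hcover.trans ?_)
            intro z hz
            simp only [Set.mem_iUnion] at hz ⊢
            obtain ⟨x, hx, hzx⟩ := hz
            exact ⟨x, Set.Finite.mem_toFinset hMfin |>.mpr hx, hzx⟩
        _ ≤ ∑ x ∈ hMfin.toFinset, volume (ball x (2 * ε)) :=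
            measure_biUnion_finset_le _ _
        _ = (hMfin.toFinset.card : ℝ≥0∞) *
            (ENNReal.ofReal ((2 * ε) ^ N) * volume (ball (0 : X) 1)) := by
            simp [Measure.addHaar_ball _ _ h2ε, hfr, Finset.sum_const, nsmul_eq_mul]
    have key : ENNReal.ofReal (∏ n, r n) ≤
        (hMfin.toFinset.card : ℝ≥0∞) * ENNReal.ofReal ((2 * ε) ^ N) := by
      rw [← ENNReal.mul_le_mul_iff_left hμB0 hμBtop, ← h1, mul_assoc]
      exact h1 ▸ h2
    have key2 : (∏ n, r n) ≤ (hMfin.toFinset.card : ℝ) * (2 * ε) ^ N := by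
      rw [← ENNReal.ofReal_natCast, ← ENNReal.ofReal_mul (by positivity)] at key
      exact (ENNReal.ofReal_le_ofReal_iff (by positivity)).mp key
    rw [div_le_iff₀ (by positivity)]
    exact key2
end

section
/- Let N ≥ 1 be an integer, let E, ε > 0 and let 0 ≤ δ < 1. Let a⁽¹⁾, …, a⁽ᴹ⁾ be distinct points of the closed Euclidean ball of radius √E centered at the origin in ℝᴺ, and suppose their cumulative error measure satisfies Δ ≤ δ. Then M ≤ (1/(1 − δ)) · (1 + √E/ε)ᴺ. -/
open Metric MeasureTheory

/-- The error region `Dⁱ` of the `i`-th codeword under minimum-distance decoding: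
the points of the closed `ε`-ball `Sⁱ` around `a i` that are at least as close to some
other codeword. -/
def errRegion {N M : ℕ} (ε : ℝ) (a : Fin M → EuclideanSpace ℝ (Fin N)) (i : Fin M) :
    Set (EuclideanSpace ℝ (Fin N)) :=
  {x | x ∈ closedBall (a i) ε ∧ ∃ j : Fin M, j ≠ i ∧ dist x (a j) ≤ dist x (a i)}

/-- The cumulative error measure `Δ = (1/M) Σᵢ vol(Dⁱ)/vol(Sⁱ)`. -/
noncomputable def cumErr {N M : ℕ} (ε : ℝ) (a : Fin M → EuclideanSpace ℝ (Fin N)) : ℝ :=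
  (1 / (M : ℝ)) * ∑ i : Fin M,
    (volume (errRegion ε a i)).toReal / (volume (closedBall (a i) ε)).toReal

lemma errRegion_measurable {N M : ℕ} (ε : ℝ) (a : Fin M → EuclideanSpace ℝ (Fin N))
    (i : Fin M) : MeasurableSet (errRegion ε a i) := by
  have : errRegion ε a i =
      closedBall (a i) ε ∩ ⋃ j ∈ {j : Fin M | j ≠ i}, {x | dist x (a j) ≤ dist x (a i)} := by
    ext x
    constructor
    · rintro ⟨hx, j, hj, hle⟩
      exact ⟨hx, Set.mem_biUnion hj hle⟩
    · rintro ⟨hx, hU⟩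
      obtain ⟨j, hj, hle⟩ := Set.mem_iUnion₂.1 hU
      exact ⟨hx, j, hj, hle⟩
  rw [this]
  apply (measurableSet_closedBall).inter
  apply MeasurableSet.biUnion (Set.to_countable _)
  intro j _
  exact (isClosed_le (continuous_id.dist continuous_const)
    (continuous_id.dist continuous_const)).measurableSet

lemma errRegion_subset {N M : ℕ} (ε : ℝ) (a : Fin M → EuclideanSpace ℝ (Fin N))
    (i : Fin M) : errRegion ε a i ⊆ closedBall (a i) ε := fun _ hx => hx.1

/-- If `a 1, …, a M` are distinct points of the closed ball of radius `√E`
in `ℝᴺ` with cumulative error measure `Δ ≤ δ < 1`, then `M ≤ (1/(1−δ))·(1 + √E/ε)ᴺ`. -/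
theorem eps_delta_capacity_upper_bound (N : ℕ) (hN : 1 ≤ N) (E ε δ : ℝ)
    (hE : 0 < E) (hε : 0 < ε) (hδ0 : 0 ≤ δ) (hδ1 : δ < 1)
    (M : ℕ) (a : Fin M → EuclideanSpace ℝ (Fin N))
    (hinj : Function.Injective a)
    (hball : ∀ i, a i ∈ closedBall (0 : EuclideanSpace ℝ (Fin N)) (Real.sqrt E))
    (herr : cumErr ε a ≤ δ) :
    (M : ℝ) ≤ 1 / (1 - δ) * (1 + Real.sqrt E / ε) ^ N := by
  have h1δ : (0:ℝ) < 1 - δ := by linarith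
  -- trivial case M = 0
  rcases Nat.eq_zero_or_pos M with hM0 | hM
  · subst hM0
    simp only [Nat.cast_zero]
    positivity
  have hMpos : (0:ℝ) < M := by exact_mod_cast hM
  have hsE : 0 ≤ Real.sqrt E := Real.sqrt_nonneg E
  set V := volume (ball (0 : EuclideanSpace ℝ (Fin N)) 1) with hV
  have hVpos : 0 < V := measure_ball_pos _ _ one_pos
  have hVlt : V < ⊤ := measure_ball_lt_top
  have hVtR : 0 < V.toReal := ENNReal.toReal_pos hVpos.ne' hVlt.ne
  have hfr : Module.finrank ℝ (EuclideanSpace ℝ (Fin N)) = N := finrank_euclideanSpace_fin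
  have hballvol : ∀ (x : EuclideanSpace ℝ (Fin N)) (r : ℝ), 0 ≤ r →
      volume (closedBall x r) = ENNReal.ofReal (r ^ N) * V := by
    intro x r hr
    rw [Measure.addHaar_closedBall _ x hr, hfr]
  have hSvol : ∀ i : Fin M, volume (closedBall (a i) ε) = ENNReal.ofReal (ε ^ N) * V :=
    fun i => hballvol (a i) ε hε.le
  have hStR : ∀ i : Fin M, (volume (closedBall (a i) ε)).toReal = ε ^ N * V.toReal := by
    intro i
    rw [hSvol i, ENNReal.toReal_mul, ENNReal.toReal_ofReal (by positivity)]
  have hSfin : ∀ i : Fin M, volume (closedBall (a i) ε) < ⊤ := fun i => measure_closedBall_lt_top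
  -- the good regions
  set G : Fin M → Set (EuclideanSpace ℝ (Fin N)) :=
    fun i => closedBall (a i) ε \ errRegion ε a i with hG
  have hGmeas : ∀ i, MeasurableSet (G i) :=
    fun i => measurableSet_closedBall.diff (errRegion_measurable ε a i)
  have hGmem : ∀ i x, x ∈ G i → x ∈ closedBall (a i) ε ∧
      ∀ j : Fin M, j ≠ i → dist x (a i) < dist x (a j) := by
    intro i x hx
    refine ⟨hx.1, fun j hj => ?_⟩
    by_contra h
    exact hx.2 ⟨hx.1, j, hj, not_lt.1 h⟩
  have hGdisj : Pairwise (Function.onFun Disjoint G) := by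
    intro i j hij
    rw [Function.onFun, Set.disjoint_left]
    intro x hxi hxj
    have h1 := (hGmem i x hxi).2 j hij.symm
    have h2 := (hGmem j x hxj).2 i hij
    linarith
  -- good regions are inside the big ball
  have hGsub : ∀ i, G i ⊆ closedBall (0 : EuclideanSpace ℝ (Fin N)) (Real.sqrt E + ε) := by
    intro i x hx
    have hx1 : dist x (a i) ≤ ε := mem_closedBall.1 hx.1
    have hx2 : dist (a i) 0 ≤ Real.sqrt E := mem_closedBall.1 (hball i)
    have := dist_triangle x (a i) 0
    exact mem_closedBall.2 (by linarith)
  -- volume comparison in ℝ≥0∞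
  have hsum : ∑ i : Fin M, volume (G i)
      ≤ volume (closedBall (0 : EuclideanSpace ℝ (Fin N)) (Real.sqrt E + ε)) := by
    calc ∑ i : Fin M, volume (G i) = ∑' i : Fin M, volume (G i) := (tsum_fintype _).symm
      _ = volume (⋃ i, G i) := (measure_iUnion hGdisj hGmeas).symm
      _ ≤ _ := measure_mono (Set.iUnion_subset hGsub)
  have hDfin : ∀ i : Fin M, volume (errRegion ε a i) ≠ ⊤ := fun i =>
    ((measure_mono (errRegion_subset ε a i)).trans_lt (hSfin i)).ne
  have hGvol : ∀ i : Fin M, (volume (G i)).toReal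
      = ε ^ N * V.toReal - (volume (errRegion ε a i)).toReal := by
    intro i
    rw [hG]
    rw [measure_diff (errRegion_subset ε a i) (errRegion_measurable ε a i).nullMeasurableSet
      (hDfin i), ENNReal.toReal_sub_of_le (measure_mono (errRegion_subset ε a i)) (hSfin i).ne,
      hStR i]
  have hGfin : ∀ i : Fin M, volume (G i) ≠ ⊤ := fun i =>
    ((measure_mono Set.diff_subset).trans_lt (hSfin i)).ne
  -- pass to real numbers
  set s0 : ℝ := ε ^ N * V.toReal with hs0
  have hs0pos : 0 < s0 := by positivity
  set d : Fin M → ℝ := fun i => (volume (errRegion ε a i)).toReal with hd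
  set B : ℝ := (Real.sqrt E + ε) ^ N * V.toReal with hB
  have hBvol : (volume (closedBall (0 : EuclideanSpace ℝ (Fin N))
      (Real.sqrt E + ε))).toReal = B := by
    rw [hballvol 0 (Real.sqrt E + ε) (by positivity), ENNReal.toReal_mul,
      ENNReal.toReal_ofReal (by positivity)]
  have hsumR : ∑ i : Fin M, (s0 - d i) ≤ B := by
    have h1 : (∑ i : Fin M, volume (G i)).toReal
        ≤ (volume (closedBall (0 : EuclideanSpace ℝ (Fin N)) (Real.sqrt E + ε))).toReal :=
      ENNReal.toReal_mono measure_closedBall_lt_top.ne hsum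
    rw [ENNReal.toReal_sum (fun i _ => hGfin i), hBvol] at h1
    calc ∑ i : Fin M, (s0 - d i) = ∑ i : Fin M, (volume (G i)).toReal := by
          refine Finset.sum_congr rfl fun i _ => ?_
          rw [hGvol i]
      _ ≤ B := h1
  -- use the error bound
  have hdsum : ∑ i : Fin M, d i ≤ δ * M * s0 := by
    have hc : cumErr ε a = (1 / (M:ℝ)) * ((∑ i : Fin M, d i) / s0) := by
      rw [cumErr]
      congr 1
      rw [Finset.sum_div]
      refine Finset.sum_congr rfl fun i _ => ?_
      rw [hStR i]
    rw [hc] at herr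
    have h2 : (∑ i : Fin M, d i) / s0 ≤ δ * M := by
      rw [one_div, inv_mul_le_iff₀ hMpos] at herr
      linarith [herr]
    calc ∑ i : Fin M, d i = (∑ i : Fin M, d i) / s0 * s0 := by
          field_simp
      _ ≤ δ * M * s0 := mul_le_mul_of_nonneg_right h2 hs0pos.le
  have hsum2 : (M : ℝ) * s0 - ∑ i : Fin M, d i ≤ B := by
    have : ∑ i : Fin M, (s0 - d i) = (M : ℝ) * s0 - ∑ i : Fin M, d i := by
      rw [Finset.sum_sub_distrib, Finset.sum_const, Finset.card_univ, Fintype.card_fin,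
        nsmul_eq_mul]
    linarith [hsumR, this.symm.le, this.le]
  have hkey : (M : ℝ) * (1 - δ) * s0 ≤ B := by nlinarith [hdsum, hsum2]
  -- rewrite B
  have hpow : (1 + Real.sqrt E / ε) ^ N * ε ^ N = (Real.sqrt E + ε) ^ N := by
    rw [← mul_pow]
    congr 1
    field_simp
    ring
  have hB2 : B = (1 + Real.sqrt E / ε) ^ N * s0 := by
    rw [hB, hs0, ← hpow]
    ring
  have hfin : (M : ℝ) * (1 - δ) ≤ (1 + Real.sqrt E / ε) ^ N := by
    rw [hB2] at hkey
    exact le_of_mul_le_mul_right (by linarith [hkey]) hs0pos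
  rw [div_mul_eq_mul_div, one_mul, le_div_iff₀ h1δ]
  linarith
end

section
/- Let N ≥ 1 be an integer, let ε > 0 and let r₁, …, r_N > 0. If C is a finite subset of ℝᴺ such that every point of the solid ellipsoid E(r) = { a ∈ ℝᴺ : Σₙ₌₁ᴺ aₙ²/rₙ² ≤ 1 } lies within Euclidean distance ε of some point of C, then the cardinality of C satisfies |C| ≥ (Πₙ₌₁ᴺ rₙ)/εᴺ. -/
open Metric Finset MeasureTheory

/-- If a finite set `C ⊆ ℝᴺ` is an `ε`-cover of the solid ellipsoid
`{a : Σ aₙ²/rₙ² ≤ 1}`, then `|C| ≥ (Π rₙ)/εᴺ`. -/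
theorem entropy_lower_bound (N : ℕ) (hN : 1 ≤ N) (ε : ℝ) (hε : 0 < ε)
    (r : Fin N → ℝ) (hr : ∀ n, 0 < r n)
    (C : Finset (EuclideanSpace ℝ (Fin N)))
    (hcov : ∀ x : EuclideanSpace ℝ (Fin N), (∑ n, (x n) ^ 2 / (r n) ^ 2 ≤ 1) →
      ∃ c ∈ C, dist x c ≤ ε) :
    (∏ n, r n) / ε ^ N ≤ (C.card : ℝ) := by
  classical
  set e : (Fin N → ℝ) ≃ₗ[ℝ] EuclideanSpace ℝ (Fin N) :=
    (EuclideanSpace.equiv (Fin N) ℝ).toLinearEquiv.symm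
  set f : (Fin N → ℝ) →ₗ[ℝ] (Fin N → ℝ) := Matrix.toLin' (Matrix.diagonal r)
  set L : EuclideanSpace ℝ (Fin N) →ₗ[ℝ] EuclideanSpace ℝ (Fin N) :=
    (e : (Fin N → ℝ) →ₗ[ℝ] EuclideanSpace ℝ (Fin N)) ∘ₗ f
      ∘ₗ (e.symm : EuclideanSpace ℝ (Fin N) →ₗ[ℝ] (Fin N → ℝ))
  have hdet : LinearMap.det L = ∏ n, r n := by
    rw [LinearMap.det_conj, LinearMap.det_toLin', Matrix.det_diagonal]
  have hLapp : ∀ (y : EuclideanSpace ℝ (Fin N)) (n : Fin N), L y n = r n * y n := by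
    intro y n
    exact Matrix.mulVec_diagonal r y n
  set S : Set (EuclideanSpace ℝ (Fin N)) :=
    {x : EuclideanSpace ℝ (Fin N) | ∑ n, (x n) ^ 2 / (r n) ^ 2 ≤ 1} with hS
  have himg : L '' (closedBall 0 1) ⊆ S := by
    rintro x ⟨y, hy, rfl⟩
    rw [mem_closedBall_zero_iff] at hy
    have hsum0 : (0:ℝ) ≤ ∑ n, (y n) ^ 2 := Finset.sum_nonneg fun n _ => sq_nonneg (y n)
    have hnorm : ∑ n, (y n) ^ 2 ≤ 1 := by
      have h2 : Real.sqrt (∑ n, (y n) ^ 2) ≤ 1 := by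
        rw [EuclideanSpace.norm_eq] at hy
        simpa [sq_abs] using hy
      nlinarith [Real.sq_sqrt hsum0, Real.sqrt_nonneg (∑ n, (y n) ^ 2)]
    have heq : ∑ n, (L y n) ^ 2 / (r n) ^ 2 = ∑ n, (y n) ^ 2 := by
      apply Finset.sum_congr rfl
      intro n _
      rw [hLapp, mul_pow, mul_comm, mul_div_assoc,
        div_self (pow_ne_zero _ (hr n).ne'), mul_one]
    simpa [S, heq] using hnorm
  have hcover : S ⊆ ⋃ c ∈ C, closedBall c ε := by
    intro x hx
    obtain ⟨c, hc, hdc⟩ := hcov x hx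
    exact Set.mem_biUnion hc hdc
  set B1 := volume (ball (0 : EuclideanSpace ℝ (Fin N)) 1) with hB1
  have hB1pos : 0 < B1 := measure_ball_pos volume 0 one_pos
  have hB1top : B1 ≠ ⊤ := measure_ball_lt_top.ne
  have hfr : Module.finrank ℝ (EuclideanSpace ℝ (Fin N)) = N := finrank_euclideanSpace_fin
  have hvolS : ENNReal.ofReal (∏ n, r n) * B1 ≤ volume S := by
    calc ENNReal.ofReal (∏ n, r n) * B1
        = ENNReal.ofReal |LinearMap.det L| * volume (closedBall (0 : EuclideanSpace ℝ (Fin N)) 1) := by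
          rw [hdet, abs_of_pos (Finset.prod_pos fun n _ => hr n),
            Measure.addHaar_closedBall _ _ zero_le_one, one_pow, ENNReal.ofReal_one, one_mul]
      _ = volume (L '' closedBall 0 1) := (Measure.addHaar_image_linearMap _ _ _).symm
      _ ≤ volume S := measure_mono himg
  have hvolC : volume S ≤ (C.card : ENNReal) * (ENNReal.ofReal (ε ^ N) * B1) := by
    calc volume S ≤ volume (⋃ c ∈ C, closedBall c ε) := measure_mono hcover
      _ ≤ ∑ c ∈ C, volume (closedBall c ε) := measure_biUnion_finset_le _ _
      _ = ∑ _c ∈ C, ENNReal.ofReal (ε ^ N) * B1 := by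
          apply Finset.sum_congr rfl
          intro c _
          rw [Measure.addHaar_closedBall _ _ hε.le, hfr]
      _ = (C.card : ENNReal) * (ENNReal.ofReal (ε ^ N) * B1) := by
          rw [Finset.sum_const, nsmul_eq_mul]
  have key : ENNReal.ofReal (∏ n, r n) ≤ (C.card : ENNReal) * ENNReal.ofReal (ε ^ N) := by
    have h := hvolS.trans hvolC
    rw [← mul_assoc] at h
    exact (ENNReal.mul_le_mul_iff_left hB1pos.ne' hB1top).mp h
  have key2 : (∏ n, r n) ≤ (C.card : ℝ) * ε ^ N := by
    have h1 : (C.card : ENNReal) * ENNReal.ofReal (ε ^ N)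
        = ENNReal.ofReal ((C.card : ℝ) * ε ^ N) := by
      rw [ENNReal.ofReal_mul (by positivity), ENNReal.ofReal_natCast]
    rw [h1] at key
    exact (ENNReal.ofReal_le_ofReal_iff (by positivity)).mp key
  rw [div_le_iff₀ (by positivity)]
  exact key2
end

section
/- Let V be a real inner product space, let ε > 0, let m ≥ 1 be an integer, and let a⁽¹⁾, …, a⁽ᵐ⁾ be points of V such that ‖a⁽ʲ⁾ − a⁽ᵏ⁾‖ ≥ 2ε for all j ≠ k. Then for every point x ∈ V, Σ_{j=1}^{m} ‖x − a⁽ʲ⁾‖² ≥ 2ε²(m − 1). -/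
open Finset

/-- equation (34) of the paper: if `a⁽¹⁾, …, a⁽ᵐ⁾` are points of a real inner
product space with `‖a⁽ʲ⁾ − a⁽ᵏ⁾‖ ≥ 2ε` for `j ≠ k`, then for every `x`,
`Σⱼ ‖x − a⁽ʲ⁾‖² ≥ 2ε²(m − 1)`. -/
theorem sum_sq_dist_ge {V : Type*} [NormedAddCommGroup V] [InnerProductSpace ℝ V]
    (ε : ℝ) (hε : 0 < ε) (m : ℕ) (hm : 1 ≤ m) (a : Fin m → V)
    (hsep : ∀ j k : Fin m, j ≠ k → 2 * ε ≤ ‖a j - a k‖) (x : V) :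
    2 * ε ^ 2 * ((m : ℝ) - 1) ≤ ∑ j : Fin m, ‖x - a j‖ ^ 2 := by
  set v : Fin m → V := fun j => x - a j with hv
  set S : ℝ := ∑ j : Fin m, ‖x - a j‖ ^ 2 with hS
  have hST : S = ∑ j : Fin m, ‖v j‖ ^ 2 := by simp [hS, hv]
  have key : ∑ j : Fin m, ∑ k : Fin m, ‖v j - v k‖ ^ 2
      = 2 * m * S - 2 * ‖∑ j : Fin m, v j‖ ^ 2 := by
    have expand : ∀ j k : Fin m, ‖v j - v k‖ ^ 2
        = ‖v j‖ ^ 2 + ‖v k‖ ^ 2 - 2 * inner ℝ (v j) (v k) := by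
      intro j k
      rw [@norm_sub_sq_real V]
      ring
    have C : ∑ j : Fin m, ∑ k : Fin m, (inner ℝ (v j) (v k) : ℝ)
        = ‖∑ j : Fin m, v j‖ ^ 2 := by
      rw [← real_inner_self_eq_norm_sq, sum_inner]
      exact Finset.sum_congr rfl fun j _ => by rw [inner_sum]
    calc ∑ j : Fin m, ∑ k : Fin m, ‖v j - v k‖ ^ 2
        = ∑ j : Fin m, ∑ k : Fin m,
            (‖v j‖ ^ 2 + ‖v k‖ ^ 2 - 2 * inner ℝ (v j) (v k)) := by
          exact Finset.sum_congr rfl fun j _ =>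
            Finset.sum_congr rfl fun k _ => expand j k
      _ = 2 * m * S - 2 * ‖∑ j : Fin m, v j‖ ^ 2 := by
          simp only [Finset.sum_sub_distrib, Finset.sum_add_distrib, ← Finset.mul_sum,
            Finset.sum_const, Finset.card_univ, Fintype.card_fin, nsmul_eq_mul]
          rw [C, hST]
          ring
  have lower : (4 * ε ^ 2) * (m * ((m : ℝ) - 1))
      ≤ ∑ j : Fin m, ∑ k : Fin m, ‖v j - v k‖ ^ 2 := by
    have step : ∀ j : Fin m, (4 * ε ^ 2) * ((m : ℝ) - 1)
        ≤ ∑ k : Fin m, ‖v j - v k‖ ^ 2 := by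
      intro j
      have hle : ∀ k : Fin m,
          (if j = k then (0:ℝ) else 4 * ε ^ 2) ≤ ‖v j - v k‖ ^ 2 := by
        intro k
        by_cases h : j = k
        · subst h; simp
        · simp only [h, if_false]
          have h1 : 2 * ε ≤ ‖v j - v k‖ := by
            have hd : v j - v k = a k - a j := by simp only [hv]; abel
            rw [hd]
            exact hsep k j (Ne.symm h)
          nlinarith [norm_nonneg (v j - v k)]
      have hsum : ∑ k : Fin m, (if j = k then (0:ℝ) else 4 * ε ^ 2)
          = (4 * ε ^ 2) * ((m : ℝ) - 1) := by
        have he : ∀ k : Fin m, (if j = k then (0:ℝ) else 4 * ε ^ 2)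
            = 4 * ε ^ 2 - (if j = k then 4 * ε ^ 2 else 0) := by
          intro k; by_cases h : j = k <;> simp [h]
        rw [Finset.sum_congr rfl fun k _ => he k, Finset.sum_sub_distrib,
          Finset.sum_ite_eq Finset.univ j (fun _ => (4 * ε ^ 2 : ℝ))]
        simp
        ring
      rw [← hsum]
      exact Finset.sum_le_sum fun k _ => hle k
    calc (4 * ε ^ 2) * (m * ((m : ℝ) - 1))
        = ∑ _j : Fin m, (4 * ε ^ 2) * ((m : ℝ) - 1) := by
          simp [Finset.sum_const, Finset.card_univ]; ring
      _ ≤ _ := Finset.sum_le_sum fun j _ => step j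
  have hm' : (0:ℝ) < m := by exact_mod_cast hm
  nlinarith [sq_nonneg ‖∑ j : Fin m, v j‖]
end

section
/- Let V be a real inner product space, let ε > 0, and let a⁽¹⁾, …, a⁽ᴹ⁾ be points of V such that ‖a⁽ʲ⁾ − a⁽ᵏ⁾‖ ≥ 2ε for all j ≠ k. Define γ(x) = max{0, 1 − x²/(2ε²)} for x ≥ 0. Then for every point a ∈ V, Σ_{j=1}^{M} γ(‖a − a⁽ʲ⁾‖) ≤ 1. -/
open Finset RealInnerProductSpace

/-- equation (37) of the paper: if `a⁽¹⁾, …, a⁽ᴹ⁾` are points of a real inner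
product space with pairwise distances at least `2ε`, and `γ(x) = max{0, 1 − x²/(2ε²)}`,
then for every point `a`, `Σⱼ γ(‖a − a⁽ʲ⁾‖) ≤ 1`. -/
theorem sum_gamma_le_one {V : Type*} [NormedAddCommGroup V] [InnerProductSpace ℝ V]
    (ε : ℝ) (hε : 0 < ε) (M : ℕ) (a : Fin M → V)
    (hsep : ∀ j k : Fin M, j ≠ k → 2 * ε ≤ ‖a j - a k‖) (x : V) :
    ∑ j : Fin M, max 0 (1 - ‖x - a j‖ ^ 2 / (2 * ε ^ 2)) ≤ 1 := by
  set c : Fin M → ℝ := fun j => max 0 (1 - ‖x - a j‖ ^ 2 / (2 * ε ^ 2)) with hc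
  set b : Fin M → V := fun j => x - a j with hb
  have hε2 : (0:ℝ) < 2 * ε ^ 2 := by positivity
  have hcnn : ∀ j, 0 ≤ c j := fun j => le_max_left _ _
  -- key: when c j > 0, ‖b j‖² = 2ε²(1 - c j)
  have hkey : ∀ j, 0 < c j → ‖b j‖ ^ 2 = 2 * ε ^ 2 * (1 - c j) := by
    intro j hj
    have h : 0 < 1 - ‖x - a j‖ ^ 2 / (2 * ε ^ 2) := by
      by_contra h
      push_neg at h
      have : c j = 0 := max_eq_left h
      linarith
    have hcj : c j = 1 - ‖x - a j‖ ^ 2 / (2 * ε ^ 2) := max_eq_right h.le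
    rw [hb]
    rw [hcj]
    field_simp
    ring
  -- off-diagonal bound
  have hoff : ∀ j k, j ≠ k →
      c j * c k * (inner ℝ (b j) (b k) : ℝ) ≤ ε ^ 2 * (c j * c k * (-(c j) - c k)) := by
    intro j k hjk
    rcases eq_or_lt_of_le (hcnn j) with hj | hj
    · simp [← hj]
    rcases eq_or_lt_of_le (hcnn k) with hk | hk
    · simp [← hk]
    have hbb : b j - b k = a k - a j := by simp only [hb]; abel
    have hdist : 2 * ε ≤ ‖b j - b k‖ := by rw [hbb]; exact hsep k j (Ne.symm hjk)
    have hdist2 : (2 * ε) ^ 2 ≤ ‖b j - b k‖ ^ 2 := by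
      apply sq_le_sq' _ hdist; linarith [norm_nonneg (b j - b k)]
    have hexp : ‖b j - b k‖ ^ 2 = ‖b j‖ ^ 2 - 2 * (inner ℝ (b j) (b k) : ℝ) + ‖b k‖ ^ 2 :=
      norm_sub_sq_real (b j) (b k)
    have hbj := hkey j hj
    have hbk := hkey k hk
    have hinner : (inner ℝ (b j) (b k) : ℝ) ≤ ε ^ 2 * (-(c j) - c k) := by nlinarith
    calc c j * c k * (inner ℝ (b j) (b k) : ℝ) ≤ c j * c k * (ε ^ 2 * (-(c j) - c k)) := by
          apply mul_le_mul_of_nonneg_left hinner (by positivity)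
      _ = ε ^ 2 * (c j * c k * (-(c j) - c k)) := by ring
  -- the double sum is nonnegative (it's a squared norm)
  have hpos : (0:ℝ) ≤ ∑ j, ∑ k, c j * c k * (inner ℝ (b j) (b k) : ℝ) := by
    have h := real_inner_self_nonneg (x := ∑ j, c j • b j)
    have heq : (inner ℝ (∑ j, c j • b j) (∑ j, c j • b j) : ℝ)
        = ∑ j, ∑ k, c j * c k * (inner ℝ (b j) (b k) : ℝ) := by
      rw [sum_inner]
      refine Finset.sum_congr rfl fun j _ => ?_
      rw [real_inner_smul_left, inner_sum, Finset.mul_sum]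
      refine Finset.sum_congr rfl fun k _ => ?_
      rw [real_inner_smul_right]; ring
    rw [heq] at h; exact h
  set Q : ℝ := ∑ j, (c j) ^ 2 with hQ
  set S : ℝ := ∑ j, c j with hS
  -- bound the double sum above
  have hbound : ∑ j, ∑ k, c j * c k * (inner ℝ (b j) (b k) : ℝ) ≤ 2 * ε ^ 2 * (Q * (1 - S)) := by
    have step : ∀ j ∈ Finset.univ, ∀ k ∈ Finset.univ, c j * c k * (inner ℝ (b j) (b k) : ℝ) ≤
        ε ^ 2 * (c j * c k * (-(c j) - c k)) +
          (if j = k then 2 * ε ^ 2 * (c j * c k) else 0) := by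
      intro j _ k _
      by_cases hjk : j = k
      · subst hjk
        rw [if_pos rfl]
        rcases eq_or_lt_of_le (hcnn j) with hj | hj
        · simp [← hj, real_inner_self_nonneg]
        · have h1 := hkey j hj
          have h2 : (inner ℝ (b j) (b j) : ℝ) = ‖b j‖ ^ 2 := real_inner_self_eq_norm_sq (b j)
          rw [h2, h1]; ring_nf
          nlinarith [sq_nonneg (c j)]
      · simp only [if_neg hjk, add_zero]
        exact hoff j k hjk
    calc ∑ j, ∑ k, c j * c k * (inner ℝ (b j) (b k) : ℝ)
        ≤ ∑ j, ∑ k, (ε ^ 2 * (c j * c k * (-(c j) - c k)) +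
            (if j = k then 2 * ε ^ 2 * (c j * c k) else 0)) := by
          apply Finset.sum_le_sum
          intro j hj
          exact Finset.sum_le_sum (step j hj)
      _ = 2 * ε ^ 2 * (Q * (1 - S)) := by
          have inner_eq : ∀ j : Fin M,
              ∑ k, (ε ^ 2 * (c j * c k * (-(c j) - c k)) +
                (if j = k then 2 * ε ^ 2 * (c j * c k) else 0))
              = (-(ε ^ 2) * (c j) ^ 2) * S + (-(ε ^ 2) * c j) * Q
                + 2 * ε ^ 2 * (c j) ^ 2 := by
            intro j
            rw [Finset.sum_add_distrib]
            congr 1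
            · rw [hS, hQ, Finset.mul_sum, Finset.mul_sum, ← Finset.sum_add_distrib]
              refine Finset.sum_congr rfl fun k _ => ?_
              ring
            · rw [Finset.sum_ite_eq (Finset.univ : Finset (Fin M)) j
                (fun k => 2 * ε ^ 2 * (c j * c k))]
              simp only [Finset.mem_univ, if_true]; ring
          rw [Finset.sum_congr rfl fun j _ => inner_eq j]
          rw [Finset.sum_add_distrib, Finset.sum_add_distrib]
          rw [show (∑ j, (-(ε ^ 2) * (c j) ^ 2) * S) = -(ε ^ 2) * Q * S by
            rw [hQ]; simp only [Finset.sum_mul, Finset.mul_sum]]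
          rw [show (∑ j, (-(ε ^ 2) * c j) * Q) = -(ε ^ 2) * S * Q by
            rw [hS]; simp only [Finset.sum_mul, Finset.mul_sum]]
          rw [show (∑ j, 2 * ε ^ 2 * (c j) ^ 2) = 2 * ε ^ 2 * Q by
            rw [hQ, Finset.mul_sum]]
          ring
  have hfin : 0 ≤ Q * (1 - S) := by nlinarith
  have hQnn : 0 ≤ Q := Finset.sum_nonneg fun j _ => sq_nonneg _
  rcases eq_or_lt_of_le hQnn with hQ0 | hQ0
  · -- Q = 0 forces all c j = 0
    have hall : ∀ j ∈ Finset.univ, (c j) ^ 2 = 0 := by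
      intro j hj
      have := (Finset.sum_eq_zero_iff_of_nonneg
        (fun j _ => sq_nonneg (c j))).mp hQ0.symm
      exact this j hj
    have : S = 0 := Finset.sum_eq_zero fun j hj => by
      have := hall j hj; exact pow_eq_zero_iff (n := 2) (by norm_num) |>.mp this
    show S ≤ 1
    rw [this]; norm_num
  · show S ≤ 1
    nlinarith
end

section
/- For each integer m ≥ 1, let λ⁽ᵐ⁾ : {1, 2, 3, …} → ℝ be a nonincreasing sequence with 0 < λ⁽ᵐ⁾ₙ ≤ 1 for all n. Assume: (i) for every α ∈ (0,1), lim_{m→∞} λ⁽ᵐ⁾_{⌊(1−α)m⌋} = 1; and (ii) for every real k > 0, lim_{m→∞} λ⁽ᵐ⁾_{⌊m + k·log₂(mπ/2)⌋} = 1/(1 + e^{kπ²}). Let N : ℕ → ℕ be such that there is a constant c > 0 with m ≤ N(m) ≤ m + c·log₂ m for all sufficiently large m. Then lim_{m→∞} (Π_{i=1}^{N(m)} λ⁽ᵐ⁾ᵢ)^{1/(2N(m))} = 1. -/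
set_option maxHeartbeats 1000000


open Filter Finset

private lemma lam_anti (lam : ℕ → ℕ → ℝ)
    (hmono : ∀ m, 1 ≤ m → ∀ n, 1 ≤ n → lam m (n + 1) ≤ lam m n)
    (m : ℕ) (hm : 1 ≤ m) : ∀ a b : ℕ, 1 ≤ a → a ≤ b → lam m b ≤ lam m a := by
  intro a b ha hab
  induction b, hab using Nat.le_induction with
  | base => exact le_rfl
  | succ n hn ih => exact (hmono m hm n (ha.trans hn)).trans ih

/-- Lemma 1 of the paper: if for each `m` the nonincreasing sequence
`λ⁽ᵐ⁾ : {1,2,…} → (0,1]` undergoes the phase transition (i) and has transition width given by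
the Landau–Widom formula (ii), and `N(m) = m + O(log m)` with `N(m) ≥ m`, then the geometric
mean `ζ(N) = (Π_{i=1}^{N(m)} λ⁽ᵐ⁾ᵢ)^{1/(2N(m))}` tends to `1` as `m → ∞`. -/
theorem geometric_mean_eigenvalues_tendsto_one (lam : ℕ → ℕ → ℝ)
    (hmono : ∀ m, 1 ≤ m → ∀ n, 1 ≤ n → lam m (n + 1) ≤ lam m n)
    (hpos : ∀ m, 1 ≤ m → ∀ n, 1 ≤ n → 0 < lam m n)
    (hle : ∀ m, 1 ≤ m → ∀ n, 1 ≤ n → lam m n ≤ 1)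
    (hphase : ∀ α : ℝ, 0 < α → α < 1 →
      Tendsto (fun m : ℕ => lam m ⌊(1 - α) * (m : ℝ)⌋₊) atTop (nhds 1))
    (hwidth : ∀ k : ℝ, 0 < k →
      Tendsto (fun m : ℕ => lam m ⌊(m : ℝ) + k * Real.logb 2 ((m : ℝ) * Real.pi / 2)⌋₊)
        atTop (nhds (1 / (1 + Real.exp (k * Real.pi ^ 2)))))
    (N : ℕ → ℕ) (c : ℝ) (hc : 0 < c)
    (hN : ∀ᶠ m in atTop, m ≤ N m ∧ (N m : ℝ) ≤ (m : ℝ) + c * Real.logb 2 (m : ℝ)) :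
    Tendsto (fun m : ℕ =>
        (∏ i ∈ Finset.Icc 1 (N m), lam m i) ^ (1 / (2 * (N m : ℝ))))
      atTop (nhds 1) := by
  have anti := lam_anti lam hmono
  -- positivity, ≤ 1 facts for products (for eventually large m)
  have hEvBasic : ∀ᶠ m : ℕ in atTop,
      (0 < ∏ i ∈ Finset.Icc 1 (N m), lam m i) ∧
      (∏ i ∈ Finset.Icc 1 (N m), lam m i) ≤ 1 := by
    filter_upwards [hN, eventually_ge_atTop 1] with m hNm hm1
    constructor
    · exact Finset.prod_pos fun i hi => hpos m hm1 i (Finset.mem_Icc.mp hi).1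
    · exact Finset.prod_le_one
        (fun i hi => (hpos m hm1 i (Finset.mem_Icc.mp hi).1).le)
        (fun i hi => hle m hm1 i (Finset.mem_Icc.mp hi).1)
  rw [tendsto_order]
  constructor
  swap
  · -- upper bound : values are ≤ 1
    intro b hb
    filter_upwards [hEvBasic, hN] with m hB hNm
    have : (∏ i ∈ Finset.Icc 1 (N m), lam m i) ^ (1 / (2 * (N m : ℝ))) ≤ 1 :=
      Real.rpow_le_one hB.1.le hB.2 (by positivity)
    linarith
  intro a ha1
  rcases le_or_gt a 0 with ha0 | ha0
  · filter_upwards [hEvBasic] with m hB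
    calc a ≤ 0 := ha0
    _ < _ := Real.rpow_pos_of_pos hB.1 _
  -- now 0 < a < 1
  have hloga : Real.log a < 0 := Real.log_neg ha0 ha1
  set ε : ℝ := -Real.log a with hε
  have hε0 : 0 < ε := by simp [hε]; linarith
  set C : ℝ := 1 / (1 + Real.exp ((c + 1) * Real.pi ^ 2)) with hC
  have hexp : (0:ℝ) < Real.exp ((c + 1) * Real.pi ^ 2) := Real.exp_pos _
  have hC0 : 0 < C := by positivity
  have hC1 : C < 1 := by
    rw [hC, div_lt_one (by positivity)]; linarith
  have hlogC : Real.log C < 0 := Real.log_neg hC0 hC1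
  set α : ℝ := min (1/2) (ε / (1 - Real.log C)) with hα
  have hα0 : 0 < α := lt_min (by norm_num) (div_pos hε0 (by linarith))
  have hα1 : α < 1 := lt_of_le_of_lt (min_le_left _ _) (by norm_num)
  have hαε : -ε < α / 2 * Real.log C := by
    have h1 : α * (1 - Real.log C) ≤ ε := by
      have := min_le_right (1/2 : ℝ) (ε / (1 - Real.log C))
      calc α * (1 - Real.log C) ≤ ε / (1 - Real.log C) * (1 - Real.log C) := by
            apply mul_le_mul_of_nonneg_right (by rw [hα]; exact this) (by linarith)
      _ = ε := div_mul_cancel₀ ε (by linarith)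
    nlinarith
  set J : ℕ → ℕ := fun m => ⌊(1 - α) * (m : ℝ)⌋₊ with hJ
  set M : ℕ → ℕ := fun m =>
    ⌊(m : ℝ) + (c + 1) * Real.logb 2 ((m : ℝ) * Real.pi / 2)⌋₊ with hM
  have hJlim : Tendsto (fun m : ℕ => lam m (J m)) atTop (nhds 1) := hphase α hα0 hα1
  have hMlim : Tendsto (fun m : ℕ => lam m (M m)) atTop (nhds C) := hwidth (c + 1) (by linarith)
  have hlogJ : Tendsto (fun m : ℕ => Real.log (lam m (J m))) atTop (nhds 0) := by
    have := (Real.continuousAt_log one_ne_zero).tendsto.comp hJlim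
    simpa [Function.comp_def] using this
  have hlogM : Tendsto (fun m : ℕ => Real.log (lam m (M m))) atTop (nhds (Real.log C)) :=
    (Real.continuousAt_log hC0.ne').tendsto.comp hMlim
  -- the error-term coefficient
  set β : ℕ → ℝ := fun m => α / 2 + (c * Real.logb 2 (m : ℝ) + 1) / (2 * (m : ℝ)) with hβ
  have hβlim : Tendsto β atTop (nhds (α / 2)) := by
    have h0 : Tendsto (fun m : ℕ => (c * Real.logb 2 (m : ℝ) + 1) / (2 * (m : ℝ)))
        atTop (nhds 0) := by
      have hlog : Tendsto (fun m : ℕ => Real.log (m : ℝ) / (m : ℝ)) atTop (nhds 0) :=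
        (Real.isLittleO_log_id_atTop.tendsto_div_nhds_zero).comp
          tendsto_natCast_atTop_atTop
      have hinv : Tendsto (fun m : ℕ => ((m : ℝ))⁻¹) atTop (nhds 0) :=
        tendsto_inv_atTop_zero.comp tendsto_natCast_atTop_atTop
      have key : Tendsto (fun m : ℕ =>
          c / (2 * Real.log 2) * (Real.log (m : ℝ) / (m : ℝ)) + 1/2 * ((m : ℝ))⁻¹)
          atTop (nhds (c / (2 * Real.log 2) * 0 + 1/2 * 0)) :=
        ((hlog.const_mul _).add (hinv.const_mul _))
      rw [show c / (2 * Real.log 2) * 0 + 1/2 * 0 = (0:ℝ) by ring] at key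
      apply key.congr'
      filter_upwards [eventually_ge_atTop 1] with m hm
      have hm0 : (0:ℝ) < (m:ℝ) := by exact_mod_cast hm
      have hl2 : Real.log 2 ≠ 0 := by
        have := Real.log_pos (by norm_num : (1:ℝ) < 2); linarith
      rw [Real.logb]
      field_simp
    have := (tendsto_const_nhds (x := α / 2)).add h0
    simpa using this
  set h : ℕ → ℝ := fun m =>
    1/2 * Real.log (lam m (J m)) + β m * Real.log (lam m (M m)) with hh
  have hhlim : Tendsto h atTop (nhds (α / 2 * Real.log C)) := by
    rw [show α / 2 * Real.log C = 1/2 * 0 + α / 2 * Real.log C by ring]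
    exact (hlogJ.const_mul (1/2 : ℝ)).add (hβlim.mul hlogM)
  have hEvh : ∀ᶠ m : ℕ in atTop, -ε < h m := hhlim.eventually (eventually_gt_nhds hαε)
  -- main estimate
  filter_upwards [hN, hEvh, hEvBasic, eventually_ge_atTop 2] with m hNm hhm hB hm2
  have hm1 : 1 ≤ m := le_trans (by norm_num) hm2
  have hm0 : (0:ℝ) < (m:ℝ) := by exact_mod_cast hm1
  -- basic index facts
  have hJ1 : 1 ≤ J m := by
    apply Nat.le_floor
    have : (1:ℝ) - α ≥ 1/2 := by
      have := min_le_left (1/2 : ℝ) (ε / (1 - Real.log C)); rw [hα]; linarith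
    have hm2' : (2:ℝ) ≤ (m:ℝ) := by exact_mod_cast hm2
    push_cast
    nlinarith
  have hJm : J m ≤ m := by
    have : (1 - α) * (m : ℝ) ≤ (m : ℝ) := by nlinarith
    calc J m ≤ ⌊(m:ℝ)⌋₊ := Nat.floor_le_floor this
    _ = m := Nat.floor_natCast m
  have hJN : J m ≤ N m := hJm.trans hNm.1
  have hNM : N m ≤ M m := by
    apply Nat.le_floor
    have hπ : (1:ℝ) < Real.pi / 2 := by
      have := Real.pi_gt_three; linarith
    have hmm : (m:ℝ) ≤ (m:ℝ) * Real.pi / 2 := by nlinarith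
    have h1 : Real.logb 2 (m:ℝ) ≤ Real.logb 2 ((m:ℝ) * Real.pi / 2) :=
      Real.logb_le_logb_of_le (by norm_num) hm0 hmm
    have h2 : 0 ≤ Real.logb 2 (m:ℝ) := Real.logb_nonneg (by norm_num) (by exact_mod_cast hm1)
    calc (N m : ℝ) ≤ (m:ℝ) + c * Real.logb 2 (m:ℝ) := hNm.2
    _ ≤ (m:ℝ) + (c+1) * Real.logb 2 ((m:ℝ) * Real.pi / 2) := by
          nlinarith [mul_nonneg hc.le (sub_nonneg.2 h1)]
  have hM1 : 1 ≤ M m := hm1.trans (hNm.1.trans hNM)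
  have hN1 : 1 ≤ N m := hm1.trans hNm.1
  have hN0 : (0:ℝ) < (N m : ℝ) := by exact_mod_cast hN1
  -- pointwise positivity and log facts
  have hlJpos : 0 < lam m (J m) := hpos m hm1 _ hJ1
  have hlMpos : 0 < lam m (M m) := hpos m hm1 _ hM1
  have hlogJ0 : Real.log (lam m (J m)) ≤ 0 := Real.log_nonpos hlJpos.le (hle m hm1 _ hJ1)
  have hlogM0 : Real.log (lam m (M m)) ≤ 0 := Real.log_nonpos hlMpos.le (hle m hm1 _ hM1)
  -- sum splitting
  have hsplit : Finset.Icc 1 (N m) = Finset.Icc 1 (J m) ∪ Finset.Ioc (J m) (N m) := by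
    ext i
    simp only [Finset.mem_Icc, Finset.mem_Ioc, Finset.mem_union]
    omega
  have hdisj : Disjoint (Finset.Icc 1 (J m)) (Finset.Ioc (J m) (N m)) := by
    rw [Finset.disjoint_left]
    intro i hi hi'
    exact absurd (Finset.mem_Ioc.mp hi').1 (not_lt.mpr (Finset.mem_Icc.mp hi).2)
  have hlogprod : Real.log (∏ i ∈ Finset.Icc 1 (N m), lam m i)
      = ∑ i ∈ Finset.Icc 1 (N m), Real.log (lam m i) :=
    Real.log_prod fun i hi => (hpos m hm1 i (Finset.mem_Icc.mp hi).1).ne'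
  have hS1 : (J m : ℝ) * Real.log (lam m (J m))
      ≤ ∑ i ∈ Finset.Icc 1 (J m), Real.log (lam m i) := by
    have := Finset.card_nsmul_le_sum (Finset.Icc 1 (J m))
      (fun i => Real.log (lam m i)) (Real.log (lam m (J m))) ?_
    · simpa [Nat.card_Icc, nsmul_eq_mul] using this
    · intro i hi
      obtain ⟨hi1, hi2⟩ := Finset.mem_Icc.mp hi
      exact Real.log_le_log hlJpos (anti m hm1 i (J m) hi1 hi2)
  have hS2 : ((N m - J m : ℕ) : ℝ) * Real.log (lam m (M m))
      ≤ ∑ i ∈ Finset.Ioc (J m) (N m), Real.log (lam m i) := by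
    have := Finset.card_nsmul_le_sum (Finset.Ioc (J m) (N m))
      (fun i => Real.log (lam m i)) (Real.log (lam m (M m))) ?_
    · simpa [Nat.card_Ioc, nsmul_eq_mul] using this
    · intro i hi
      obtain ⟨hi1, hi2⟩ := Finset.mem_Ioc.mp hi
      exact Real.log_le_log hlMpos (anti m hm1 i (M m) (hJ1.trans hi1.le) (hi2.trans hNM))
  have hSum : (J m : ℝ) * Real.log (lam m (J m))
      + ((N m - J m : ℕ) : ℝ) * Real.log (lam m (M m))
      ≤ Real.log (∏ i ∈ Finset.Icc 1 (N m), lam m i) := by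
    rw [hlogprod, hsplit, Finset.sum_union hdisj]
    exact add_le_add hS1 hS2
  -- coefficient bounds
  have hcoef1 : (J m : ℝ) / (2 * N m) * Real.log (lam m (J m))
      ≥ 1/2 * Real.log (lam m (J m)) := by
    have h1 : (J m : ℝ) / (2 * N m) ≤ 1/2 := by
      rw [div_le_iff₀ (by positivity)]
      have : (J m : ℝ) ≤ (N m : ℝ) := by exact_mod_cast hJN
      linarith
    nlinarith [mul_le_mul_of_nonpos_right h1 hlogJ0]
  have hcoef2 : ((N m - J m : ℕ) : ℝ) / (2 * N m) * Real.log (lam m (M m))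
      ≥ β m * Real.log (lam m (M m)) := by
    have hfloor : (1 - α) * (m:ℝ) - 1 ≤ (J m : ℝ) := by
      have := Nat.sub_one_lt_floor ((1 - α) * (m:ℝ))
      rw [hJ]; linarith
    have hNJ : ((N m - J m : ℕ) : ℝ) ≤ α * m + c * Real.logb 2 (m:ℝ) + 1 := by
      rw [Nat.cast_sub hJN]
      have := hNm.2
      nlinarith
    have hnum0 : (0:ℝ) ≤ α * m + c * Real.logb 2 (m:ℝ) + 1 := by
      have h2 : 0 ≤ Real.logb 2 (m:ℝ) := Real.logb_nonneg (by norm_num) (by exact_mod_cast hm1)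
      nlinarith
    have hden : (2:ℝ) * m ≤ 2 * N m := by
      have : (m:ℝ) ≤ (N m : ℝ) := by exact_mod_cast hNm.1
      linarith
    have hdiv : ((N m - J m : ℕ) : ℝ) / (2 * N m)
        ≤ (α * m + c * Real.logb 2 (m:ℝ) + 1) / (2 * m) :=
      div_le_div₀ hnum0 hNJ (by positivity) hden
    have hβeq : (α * m + c * Real.logb 2 (m:ℝ) + 1) / (2 * m) = β m := by
      rw [hβ]; field_simp; ring
    rw [hβeq] at hdiv
    nlinarith [mul_le_mul_of_nonpos_right hdiv hlogM0]
  -- combine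
  have hmain : h m ≤ Real.log (∏ i ∈ Finset.Icc 1 (N m), lam m i) * (1 / (2 * (N m : ℝ))) := by
    have e1 : Real.log (∏ i ∈ Finset.Icc 1 (N m), lam m i) * (1 / (2 * (N m : ℝ)))
        ≥ ((J m : ℝ) * Real.log (lam m (J m))
          + ((N m - J m : ℕ) : ℝ) * Real.log (lam m (M m))) * (1 / (2 * (N m : ℝ))) := by
      exact mul_le_mul_of_nonneg_right hSum (by positivity)
    have e2 : ((J m : ℝ) * Real.log (lam m (J m))
          + ((N m - J m : ℕ) : ℝ) * Real.log (lam m (M m))) * (1 / (2 * (N m : ℝ)))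
        = (J m : ℝ) / (2 * N m) * Real.log (lam m (J m))
          + ((N m - J m : ℕ) : ℝ) / (2 * N m) * Real.log (lam m (M m)) := by
      field_simp
      try ring
    rw [e2] at e1
    calc h m ≤ (J m : ℝ) / (2 * N m) * Real.log (lam m (J m))
          + ((N m - J m : ℕ) : ℝ) / (2 * N m) * Real.log (lam m (M m)) :=
        add_le_add hcoef1 hcoef2
    _ ≤ _ := e1
  -- conclude
  have hrw : (∏ i ∈ Finset.Icc 1 (N m), lam m i) ^ (1 / (2 * (N m : ℝ)))
      = Real.exp (Real.log (∏ i ∈ Finset.Icc 1 (N m), lam m i) * (1 / (2 * (N m : ℝ)))) :=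
    Real.rpow_def_of_pos hB.1 _
  rw [hrw]
  calc a = Real.exp (Real.log a) := (Real.exp_log ha0).symm
  _ < Real.exp (Real.log (∏ i ∈ Finset.Icc 1 (N m), lam m i) * (1 / (2 * (N m : ℝ)))) := by
      apply Real.exp_lt_exp.mpr
      have : Real.log a = -ε := by rw [hε]; ring
      rw [this]
      exact lt_of_lt_of_le hhm hmain
end

section
/- Let E, ε > 0 with √E > ε, let R′ be a real number with 0 < R′ < log₂(√E/ε), let N ≥ 1 be an integer, and set M = ⌊2^{N·R′}⌋. Then there exist points a⁽¹⁾, …, a⁽ᴹ⁾ in the closed Euclidean ball of radius √E centered at the origin in ℝᴺ whose cumulative error measure satisfies Δ ≤ 2^{−N·(log₂(√E/ε) − R′)}. -/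
open Metric MeasureTheory
open scoped ENNReal

variable {N : ℕ}

lemma overlap_set_eq (ε : ℝ) (A : Set (EuclideanSpace ℝ (Fin N))) (c : EuclideanSpace ℝ (Fin N)) :
    A ∩ closedBall c ε = Prod.mk c ⁻¹' {p : (EuclideanSpace ℝ (Fin N)) × (EuclideanSpace ℝ (Fin N)) | p.2 ∈ A ∧ dist p.2 p.1 ≤ ε} := by
  ext x; simp [mem_closedBall, and_comm]

lemma overlap_meas_set (ε : ℝ) (A : Set (EuclideanSpace ℝ (Fin N))) (hA : MeasurableSet A) :
    MeasurableSet {p : (EuclideanSpace ℝ (Fin N)) × (EuclideanSpace ℝ (Fin N)) | p.2 ∈ A ∧ dist p.2 p.1 ≤ ε} :=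
  (measurable_snd hA).inter
    ((isClosed_le (continuous_snd.dist continuous_fst) continuous_const).measurableSet)

lemma meas_overlap (ε : ℝ) (A : Set (EuclideanSpace ℝ (Fin N))) (hA : MeasurableSet A) :
    Measurable (fun c : EuclideanSpace ℝ (Fin N) => volume (A ∩ closedBall c ε)) := by
  simp_rw [overlap_set_eq ε A]
  exact measurable_measure_prodMk_left (overlap_meas_set ε A hA)

lemma lint_overlap (ε : ℝ) (hε : 0 ≤ ε) (A : Set (EuclideanSpace ℝ (Fin N))) (hA : MeasurableSet A) :
    ∫⁻ c, volume (A ∩ closedBall c ε) =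
      volume A * volume (closedBall (0 : EuclideanSpace ℝ (Fin N)) ε) := by
  have h1 : ∫⁻ c, volume (A ∩ closedBall c ε) =
      (volume.prod volume) {p : (EuclideanSpace ℝ (Fin N)) × (EuclideanSpace ℝ (Fin N)) | p.2 ∈ A ∧ dist p.2 p.1 ≤ ε} := by
    rw [Measure.prod_apply (overlap_meas_set ε A hA)]
    simp_rw [overlap_set_eq ε A]
  rw [h1, Measure.prod_apply_symm (overlap_meas_set ε A hA)]
  have h3 : ∀ x : EuclideanSpace ℝ (Fin N),
      volume ((fun c => (c, x)) ⁻¹' {p : (EuclideanSpace ℝ (Fin N)) × (EuclideanSpace ℝ (Fin N)) | p.2 ∈ A ∧ dist p.2 p.1 ≤ ε})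
        = A.indicator (fun _ => volume (closedBall (0 : EuclideanSpace ℝ (Fin N)) ε)) x := by
    intro x
    by_cases hx : x ∈ A
    · have : ((fun c => (c, x)) ⁻¹' {p : (EuclideanSpace ℝ (Fin N)) × (EuclideanSpace ℝ (Fin N)) | p.2 ∈ A ∧ dist p.2 p.1 ≤ ε}) = closedBall x ε := by
        ext c; simp [hx, mem_closedBall, dist_comm]
      rw [this, Set.indicator_of_mem hx, Measure.addHaar_closedBall_center]
    · have : ((fun c => (c, x)) ⁻¹' {p : (EuclideanSpace ℝ (Fin N)) × (EuclideanSpace ℝ (Fin N)) | p.2 ∈ A ∧ dist p.2 p.1 ≤ ε}) = ∅ := by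
        ext c; simp [hx]
      rw [this, Set.indicator_of_notMem hx, measure_empty]
  simp_rw [h3]
  rw [lintegral_indicator_const hA, mul_comm]

lemma ball_pos_ne (r : ℝ) (hr : 0 < r) :
    volume (closedBall (0 : EuclideanSpace ℝ (Fin N)) r) ≠ 0 :=
  (measure_closedBall_pos volume _ hr).ne'

lemma ball_ne_top (r : ℝ) :
    volume (closedBall (0 : EuclideanSpace ℝ (Fin N)) r) ≠ ⊤ :=
  measure_closedBall_lt_top.ne

lemma exists_point (ρ ε : ℝ) (hρ : 0 < ρ) (hε : 0 < ε) (k : ℕ)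
    (g : Fin k → EuclideanSpace ℝ (Fin N)) :
    ∃ c ∈ closedBall (0 : EuclideanSpace ℝ (Fin N)) ρ,
      (∑ j : Fin k, volume (closedBall c ε ∩ closedBall (g j) ε)) ≤
        (k : ℝ≥0∞) * (volume (closedBall (0 : EuclideanSpace ℝ (Fin N)) ε) *
          volume (closedBall (0 : EuclideanSpace ℝ (Fin N)) ε) /
          volume (closedBall (0 : EuclideanSpace ℝ (Fin N)) ρ)) := by
  set vε := volume (closedBall (0 : EuclideanSpace ℝ (Fin N)) ε) with hvε
  set vB := volume (closedBall (0 : EuclideanSpace ℝ (Fin N)) ρ) with hvB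
  set f : EuclideanSpace ℝ (Fin N) → ℝ≥0∞ :=
    fun c => ∑ j : Fin k, volume (closedBall (g j) ε ∩ closedBall c ε) with hf
  have hfm : Measurable f :=
    Finset.measurable_sum _ fun j _ => meas_overlap ε _ measurableSet_closedBall
  have hint : ∫⁻ c in closedBall (0 : EuclideanSpace ℝ (Fin N)) ρ, f c ≤ (k : ℝ≥0∞) * (vε * vε) := by
    refine le_trans (setLIntegral_le_lintegral _ _) ?_
    rw [hf]
    rw [lintegral_finset_sum _ fun j _ => meas_overlap ε _ measurableSet_closedBall]
    have : ∀ j : Fin k, ∫⁻ c, volume (closedBall (g j) ε ∩ closedBall c ε) = vε * vε := by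
      intro j
      rw [lint_overlap ε hε.le _ measurableSet_closedBall, Measure.addHaar_closedBall_center]
    simp only [this, Finset.sum_const, Finset.card_univ, Fintype.card_fin, nsmul_eq_mul]
    exact le_rfl
  obtain ⟨c, hc, hcle⟩ := exists_le_setLAverage (μ := volume)
    (s := closedBall (0 : EuclideanSpace ℝ (Fin N)) ρ)
    (ball_pos_ne ρ hρ) (ball_ne_top ρ) hfm.aemeasurable
  refine ⟨c, hc, ?_⟩
  have h1 : f c ≤ (k : ℝ≥0∞) * (vε * vε) / vB := by
    refine hcle.trans ?_
    rw [setLAverage_eq]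
    exact ENNReal.div_le_div hint le_rfl
  have h2 : f c = ∑ j : Fin k, volume (closedBall c ε ∩ closedBall (g j) ε) := by
    simp [hf, Set.inter_comm]
  rw [← h2]
  rw [mul_div_assoc] at h1
  exact h1

lemma exists_codebook (ρ ε : ℝ) (hρ : 0 < ρ) (hε : 0 < ε) (M : ℕ) :
    ∃ a : Fin M → EuclideanSpace ℝ (Fin N),
      (∀ i, a i ∈ closedBall (0 : EuclideanSpace ℝ (Fin N)) ρ) ∧
      ∀ i : Fin M,
        (∑ j : Fin M, if (j : ℕ) < (i : ℕ) then
            volume (closedBall (a i) ε ∩ closedBall (a j) ε) else 0) ≤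
          ((i : ℕ) : ℝ≥0∞) * (volume (closedBall (0 : EuclideanSpace ℝ (Fin N)) ε) *
            volume (closedBall (0 : EuclideanSpace ℝ (Fin N)) ε) /
            volume (closedBall (0 : EuclideanSpace ℝ (Fin N)) ρ)) := by
  induction M with
  | zero => exact ⟨Fin.elim0, fun i => i.elim0, fun i => i.elim0⟩
  | succ M ih =>
    obtain ⟨a, ha, hsum⟩ := ih
    obtain ⟨c, hc, hcsum⟩ := exists_point ρ ε hρ hε M a
    refine ⟨Fin.snoc a c, ?_, ?_⟩
    · intro i
      induction i using Fin.lastCases with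
      | last => simpa using hc
      | cast i => simpa using ha i
    · intro i
      induction i using Fin.lastCases with
      | last =>
        rw [Fin.sum_univ_castSucc]
        simp only [Fin.snoc_castSucc, Fin.snoc_last, Fin.coe_castSucc, Fin.val_last,
          lt_irrefl, if_false, add_zero, Fin.is_lt, if_true]
        exact hcsum
      | cast i =>
        have h := hsum i
        rw [Fin.sum_univ_castSucc]
        simp only [Fin.snoc_castSucc, Fin.snoc_last, Fin.coe_castSucc, Fin.val_last]
        rw [if_neg (by omega : ¬ ((M : ℕ) < (i : ℕ))), add_zero]
        exact h

lemma err_le {M : ℕ} (ε : ℝ) (a : Fin M → EuclideanSpace ℝ (Fin N)) (i : Fin M) :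
    volume (errRegion ε a i) ≤
      ∑ j ∈ Finset.univ.erase i, volume (closedBall (a i) ε ∩ closedBall (a j) ε) := by
  refine le_trans (measure_mono ?_) (measure_biUnion_finset_le _ _)
  rintro x ⟨hx1, j, hj, hd⟩
  exact Set.mem_biUnion (Finset.mem_erase.mpr ⟨hj, Finset.mem_univ j⟩)
    ⟨hx1, mem_closedBall.mpr (hd.trans hx1)⟩

lemma double_sum {M : ℕ} (X : Fin M → Fin M → ℝ≥0∞) (hsymm : ∀ i j, X i j = X j i) :
    (∑ i : Fin M, ∑ j ∈ Finset.univ.erase i, X i j)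
      = 2 * ∑ i : Fin M, ∑ j : Fin M, if (j : ℕ) < (i : ℕ) then X i j else 0 := by
  classical
  have h1 : ∀ i : Fin M, (∑ j ∈ Finset.univ.erase i, X i j)
      = (∑ j : Fin M, if (j : ℕ) < (i : ℕ) then X i j else 0)
        + (∑ j : Fin M, if (i : ℕ) < (j : ℕ) then X i j else 0) := by
    intro i
    rw [← Finset.sum_add_distrib, ← Finset.filter_ne' Finset.univ i, Finset.sum_filter]
    refine Finset.sum_congr rfl fun j _ => ?_
    rcases lt_trichotomy (j : ℕ) (i : ℕ) with h | h | h
    · rw [if_pos (fun e => absurd (congrArg Fin.val e) (by omega)), if_pos h,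
        if_neg (by omega), add_zero]
    · rw [if_neg (by simp [Fin.ext h]), if_neg (by omega), if_neg (by omega), add_zero]
    · rw [if_pos (fun e => absurd (congrArg Fin.val e) (by omega)), if_neg (by omega),
        if_pos h, zero_add]
  have h2 : (∑ i : Fin M, ∑ j : Fin M, if (i : ℕ) < (j : ℕ) then X i j else 0)
      = ∑ i : Fin M, ∑ j : Fin M, if (j : ℕ) < (i : ℕ) then X i j else 0 := by
    rw [Finset.sum_comm]
    exact Finset.sum_congr rfl fun i _ => Finset.sum_congr rfl fun j _ => by rw [hsymm]
  simp_rw [h1]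
  rw [Finset.sum_add_distrib, h2, two_mul]

/-- deterministic error exponent, Appendix C: for `√E > ε > 0`, any rate
`0 < R′ < log₂(√E/ε)` and `M = ⌊2^{N·R′}⌋`, there is a codebook of `M` points in the closed
ball of radius `√E` in `ℝᴺ` with cumulative error measure
`Δ ≤ 2^{−N·(log₂(√E/ε) − R′)}`. -/
theorem error_exponent (E ε : ℝ) (hE : 0 < E) (hε : 0 < ε) (hEε : ε < Real.sqrt E)
    (R' : ℝ) (hR'pos : 0 < R') (hR' : R' < Real.logb 2 (Real.sqrt E / ε))
    (N : ℕ) (hN : 1 ≤ N) :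
    ∃ a : Fin ⌊(2 : ℝ) ^ ((N : ℝ) * R')⌋₊ → EuclideanSpace ℝ (Fin N),
      (∀ i, a i ∈ closedBall (0 : EuclideanSpace ℝ (Fin N)) (Real.sqrt E)) ∧
      cumErr ε a ≤ (2 : ℝ) ^ (-(N : ℝ) * (Real.logb 2 (Real.sqrt E / ε) - R')) := by
  classical
  have hE' : 0 < Real.sqrt E := hε.trans hEε
  set M := ⌊(2 : ℝ) ^ ((N : ℝ) * R')⌋₊ with hMdef
  have hM1 : 1 ≤ M := by
    rw [hMdef]
    refine Nat.le_floor ?_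
    rw [Nat.cast_one]
    exact Real.one_le_rpow one_le_two (by positivity)
  have hMne : ((M : ℝ)) ≠ 0 := by positivity
  obtain ⟨a, ha, hsum⟩ := exists_codebook (Real.sqrt E) ε hE' hε M
  refine ⟨a, ha, ?_⟩
  set q : ℝ≥0∞ := volume (closedBall (0 : EuclideanSpace ℝ (Fin N)) ε) *
      volume (closedBall (0 : EuclideanSpace ℝ (Fin N)) ε) /
      volume (closedBall (0 : EuclideanSpace ℝ (Fin N)) (Real.sqrt E)) with hq
  -- total bound in ℝ≥0∞
  have htot : (∑ i : Fin M, volume (errRegion ε a i)) ≤ ((M : ℝ≥0∞) * M) * q := by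
    have step1 : (∑ i : Fin M, volume (errRegion ε a i)) ≤
        ∑ i : Fin M, ∑ j ∈ Finset.univ.erase i,
          volume (closedBall (a i) ε ∩ closedBall (a j) ε) :=
      Finset.sum_le_sum fun i _ => err_le ε a i
    have step2 : (∑ i : Fin M, ∑ j ∈ Finset.univ.erase i,
        volume (closedBall (a i) ε ∩ closedBall (a j) ε))
        = 2 * ∑ i : Fin M, ∑ j : Fin M, if (j : ℕ) < (i : ℕ) then
            volume (closedBall (a i) ε ∩ closedBall (a j) ε) else 0 :=
      double_sum _ fun i j => by rw [Set.inter_comm]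
    have step3 : (2 * ∑ i : Fin M, ∑ j : Fin M, if (j : ℕ) < (i : ℕ) then
          volume (closedBall (a i) ε ∩ closedBall (a j) ε) else 0)
        ≤ 2 * ∑ i : Fin M, ((i : ℕ) : ℝ≥0∞) * q :=
      mul_le_mul_right (Finset.sum_le_sum fun i _ => hsum i) 2
    have step4 : (2 * ∑ i : Fin M, ((i : ℕ) : ℝ≥0∞) * q) = ((M * (M - 1) : ℕ) : ℝ≥0∞) * q := by
      rw [← Finset.sum_mul, ← mul_assoc]
      congr 1
      have : (2 : ℝ≥0∞) * ∑ i : Fin M, ((i : ℕ) : ℝ≥0∞)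
          = (((∑ i ∈ Finset.range M, i) * 2 : ℕ) : ℝ≥0∞) := by
        push_cast
        rw [Fin.sum_univ_eq_sum_range (fun i => (i : ℝ≥0∞)) M]
        ring
      rw [this, Finset.sum_range_id_mul_two]
    have step5 : (((M * (M - 1) : ℕ) : ℝ≥0∞)) * q ≤ ((M : ℝ≥0∞) * M) * q := by
      refine mul_le_mul_left ?_ q
      have : ((M * M : ℕ) : ℝ≥0∞) = (M : ℝ≥0∞) * M := by push_cast; ring
      rw [← this]
      exact_mod_cast Nat.cast_le.mpr (Nat.mul_le_mul_left M (Nat.sub_le M 1))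
    calc (∑ i : Fin M, volume (errRegion ε a i)) ≤ _ := step1
      _ = _ := step2
      _ ≤ _ := step3
      _ = _ := step4
      _ ≤ _ := step5
  -- real quantities
  set vε := (volume (closedBall (0 : EuclideanSpace ℝ (Fin N)) ε)).toReal with hvε
  set vB := (volume (closedBall (0 : EuclideanSpace ℝ (Fin N)) (Real.sqrt E))).toReal with hvB
  have hvεpos : 0 < vε := ENNReal.toReal_pos (ball_pos_ne ε hε) (ball_ne_top ε)
  have hvBpos : 0 < vB := ENNReal.toReal_pos (ball_pos_ne _ hE') (ball_ne_top _)
  have hqtop : q ≠ ⊤ := by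
    rw [hq]
    exact (ENNReal.div_lt_top (ENNReal.mul_ne_top (ball_ne_top ε) (ball_ne_top ε))
      (ball_pos_ne _ hE')).ne
  have hqtoReal : q.toReal = vε * vε / vB := by
    rw [hq, ENNReal.toReal_div, ENNReal.toReal_mul]
  have herrfin : ∀ i : Fin M, volume (errRegion ε a i) ≠ ⊤ := fun i =>
    ((measure_mono (fun x hx => hx.1)).trans_lt measure_closedBall_lt_top).ne
  -- rewrite cumErr
  have hcum : cumErr ε a = (1 / (M : ℝ)) * ((∑ i : Fin M, volume (errRegion ε a i)).toReal / vε) := by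
    rw [cumErr]
    congr 1
    have hball : ∀ i : Fin M, volume (closedBall (a i) ε)
        = volume (closedBall (0 : EuclideanSpace ℝ (Fin N)) ε) := fun i =>
      Measure.addHaar_closedBall_center volume (a i) ε
    simp_rw [hball]
    rw [← Finset.sum_div, ENNReal.toReal_sum (fun i _ => herrfin i)]
  have hSle : (∑ i : Fin M, volume (errRegion ε a i)).toReal ≤ (M : ℝ) * M * (vε * vε / vB) := by
    have := ENNReal.toReal_mono (ENNReal.mul_ne_top
      (ENNReal.mul_ne_top (ENNReal.natCast_ne_top M) (ENNReal.natCast_ne_top M)) hqtop) htot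
    rw [ENNReal.toReal_mul, ENNReal.toReal_mul, hqtoReal] at this
    simpa using this
  have hcum2 : cumErr ε a ≤ (M : ℝ) * (vε / vB) := by
    rw [hcum]
    have h1 : (1 / (M : ℝ)) * ((∑ i : Fin M, volume (errRegion ε a i)).toReal / vε)
        ≤ (1 / (M : ℝ)) * (((M : ℝ) * M * (vε * vε / vB)) / vε) := by
      gcongr
    refine h1.trans (le_of_eq ?_)
    field_simp
  -- geometry: vε / vB = (ε / √E)^N
  have hratio : vε / vB = (ε / Real.sqrt E) ^ N := by
    have hc : 0 < (volume (closedBall (0 : EuclideanSpace ℝ (Fin N)) 1)).toReal :=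
      ENNReal.toReal_pos (ball_pos_ne 1 one_pos) (ball_ne_top 1)
    have h1 : vε = ε ^ N * (volume (closedBall (0 : EuclideanSpace ℝ (Fin N)) 1)).toReal := by
      rw [hvε, Measure.addHaar_closedBall' volume _ hε.le, ENNReal.toReal_mul,
        ENNReal.toReal_ofReal (pow_nonneg hε.le _), finrank_euclideanSpace_fin]
    have h2 : vB = (Real.sqrt E) ^ N * (volume (closedBall (0 : EuclideanSpace ℝ (Fin N)) 1)).toReal := by
      rw [hvB, Measure.addHaar_closedBall' volume _ hE'.le, ENNReal.toReal_mul,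
        ENNReal.toReal_ofReal (pow_nonneg hE'.le _), finrank_euclideanSpace_fin]
    rw [h1, h2, div_pow, mul_div_mul_right _ _ hc.ne']
  -- RHS identity
  have hRHS : (2 : ℝ) ^ (-(N : ℝ) * (Real.logb 2 (Real.sqrt E / ε) - R'))
      = (2 : ℝ) ^ ((N : ℝ) * R') * (ε / Real.sqrt E) ^ N := by
    have hx : (0 : ℝ) < Real.sqrt E / ε := div_pos hE' hε
    have hexp : -(N : ℝ) * (Real.logb 2 (Real.sqrt E / ε) - R')
        = (N : ℝ) * R' + Real.logb 2 (Real.sqrt E / ε) * (-(N : ℝ)) := by ring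
    rw [hexp, Real.rpow_add two_pos,
      Real.rpow_mul (le_of_lt two_pos) (Real.logb 2 (Real.sqrt E / ε)) (-(N : ℝ)),
      Real.rpow_logb two_pos (by norm_num) hx]
    congr 1
    rw [Real.rpow_neg hx.le, Real.rpow_natCast, ← inv_pow, inv_div]
  -- final comparison
  rw [hRHS]
  refine hcum2.trans ?_
  rw [hratio]
  have hMle : (M : ℝ) ≤ (2 : ℝ) ^ ((N : ℝ) * R') := Nat.floor_le (by positivity)
  exact mul_le_mul_of_nonneg_right hMle (pow_nonneg (div_nonneg hε.le hE'.le) N)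
end

section
/- Fix real numbers R, ε > 0. For each integer N ≥ 1, let M_N be the largest cardinality of a subset of the closed Euclidean ball of radius R centered at the origin in ℝᴺ whose distinct points are at pairwise Euclidean distance at least 2ε. Then liminf_{N→∞} (log₂ M_N)/N ≥ log₂(R/ε) − 1 and limsup_{N→∞} (log₂ M_N)/N ≤ log₂(1 + R/(√2·ε)). -/
open Metric Filter Module MeasureTheory Topology
open scoped ENNReal NNReal


lemma inner_self_pos' {E : Type} [NormedAddCommGroup E] [InnerProductSpace ℝ E]
    {v : E} (hv : v ≠ 0) : (0:ℝ) < inner (𝕜 := ℝ) v v := by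
  rw [real_inner_self_eq_norm_sq]
  have : 0 < ‖v‖ := norm_pos_iff.mpr hv
  positivity

lemma obtuse_card (n : ℕ) : ∀ (E : Type) [NormedAddCommGroup E] [InnerProductSpace ℝ E]
    [FiniteDimensional ℝ E], finrank ℝ E = n → ∀ s : Finset E, (∀ v ∈ s, v ≠ 0) →
    (∀ v ∈ s, ∀ w ∈ s, v ≠ w → inner (𝕜 := ℝ) v w ≤ 0) → s.card ≤ 2 * n := by
  classical
  induction n with
  | zero =>
    intro E _ _ _ hrank s h0 _
    have hsub : Subsingleton E := (Module.finrank_zero_iff (R := ℝ)).mp hrank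
    rcases s.eq_empty_or_nonempty with h | ⟨v, hv⟩
    · simp [h]
    · exact absurd (Subsingleton.elim v 0) (h0 v hv)
  | succ n ih =>
    intro E _ _ _ hrank s h0 hneg
    rcases s.eq_empty_or_nonempty with h | ⟨v, hv⟩
    · simp [h]
    have hv0 : v ≠ 0 := h0 v hv
    have hvsq : (0:ℝ) < inner (𝕜 := ℝ) v v := inner_self_pos' hv0
    set K : Submodule ℝ E := (ℝ ∙ v)ᗮ with hK
    have hrankK : finrank ℝ K = n := by
      have h1 : finrank ℝ (ℝ ∙ v) = 1 := finrank_span_singleton hv0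
      have h2 := Submodule.finrank_add_finrank_orthogonal (K := (ℝ ∙ v))
      rw [← hK] at h2
      omega
    set c : E → ℝ := fun x => inner (𝕜 := ℝ) v x / inner (𝕜 := ℝ) v v with hc
    have hmem : ∀ x : E, x - c x • v ∈ K := by
      intro x
      rw [hK, Submodule.mem_orthogonal]
      intro u hu
      rcases Submodule.mem_span_singleton.mp hu with ⟨a, rfl⟩
      rw [real_inner_smul_left, inner_sub_right, real_inner_smul_right, hc]
      field_simp
      ring
    set f : E → K := fun x => ⟨x - c x • v, hmem x⟩ with hf
    have hinner : ∀ x y : E, inner (𝕜 := ℝ) (f x) (f y)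
        = inner (𝕜 := ℝ) x y - c x * c y * inner (𝕜 := ℝ) v v := by
      intro x y
      have h1 : inner (𝕜 := ℝ) (f x) (f y) = inner (𝕜 := ℝ) (x - c x • v) (y - c y • v) := rfl
      have hxv : inner (𝕜 := ℝ) x v = inner (𝕜 := ℝ) v x := real_inner_comm v x
      rw [h1, inner_sub_left, inner_sub_right, inner_sub_right, real_inner_smul_left,
        real_inner_smul_left, real_inner_smul_right, real_inner_smul_right, hxv, hc]
      field_simp
      ring
    have hcle : ∀ x ∈ s, x ≠ v → c x ≤ 0 := by
      intro x hx hxv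
      exact div_nonpos_of_nonpos_of_nonneg (hneg v hv x hx (Ne.symm hxv)) hvsq.le
    have hczero : ∀ x, c x = 0 → x - c x • v = 0 → x = 0 := by
      intro x h h2
      rw [h] at h2; simpa using h2
    set t := s.erase v with ht
    set t₀ := t.filter (fun x => x - c x • v = 0) with ht₀
    set t₁ := t.filter (fun x => ¬ (x - c x • v = 0)) with ht₁
    have hmem_t₁ : ∀ x ∈ t₁, (x ≠ v ∧ x ∈ s) ∧ ¬ (x - c x • v = 0) := by
      intro x hx
      simpa [ht₁, ht, Finset.mem_filter, Finset.mem_erase] using hx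
    have hct₀ : t₀.card ≤ 1 := by
      rw [Finset.card_le_one]
      intro x hx y hy
      by_contra hxy
      simp only [ht₀, Finset.mem_filter, ht, Finset.mem_erase] at hx hy
      have hxs := hx.1.2; have hys := hy.1.2
      have hcx : c x < 0 := by
        rcases lt_or_eq_of_le (hcle x hxs hx.1.1) with h | h
        · exact h
        · exact absurd (hczero x h hx.2) (h0 x hxs)
      have hcy : c y < 0 := by
        rcases lt_or_eq_of_le (hcle y hys hy.1.1) with h | h
        · exact h
        · exact absurd (hczero y h hy.2) (h0 y hys)
      have hxe : x = c x • v := by have := hx.2; rwa [sub_eq_zero] at this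
      have hye : y = c y • v := by have := hy.2; rwa [sub_eq_zero] at this
      have key : inner (𝕜 := ℝ) x y = c x * c y * inner (𝕜 := ℝ) v v := by
        conv_lhs => rw [hxe, hye]
        rw [real_inner_smul_left, real_inner_smul_right]; ring
      have hpos : (0:ℝ) < inner (𝕜 := ℝ) x y := by
        rw [key]; exact mul_pos (mul_pos_of_neg_of_neg hcx hcy) hvsq
      exact absurd (hneg x hxs y hys hxy) (not_le.mpr hpos)
    have hinj : Set.InjOn f t₁ := by
      intro x hx' y hy' hfxy
      by_contra hxy
      have hx := hmem_t₁ x hx'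
      have hy := hmem_t₁ y hy'
      have hxs := hx.1.2; have hys := hy.1.2
      have hfy0 : (0:ℝ) < inner (𝕜 := ℝ) (f y) (f y) := by
        apply inner_self_pos'
        intro h
        apply hy.2
        have : (f y : E) = 0 := by rw [h]; rfl
        simpa [hf] using this
      have h1 := hinner x y
      rw [hfxy] at h1
      have h2 : 0 ≤ c x * c y := by
        have := hcle x hxs hx.1.1
        have := hcle y hys hy.1.1
        nlinarith
      have h3 : 0 ≤ c x * c y * inner (𝕜 := ℝ) v v := mul_nonneg h2 hvsq.le
      have hpos : (0:ℝ) < inner (𝕜 := ℝ) x y := by linarith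
      exact absurd (hneg x hxs y hys hxy) (not_le.mpr hpos)
    have hcard1 : (t₁.image f).card = t₁.card := Finset.card_image_of_injOn hinj
    have happ := ih K hrankK (t₁.image f) ?_ ?_
    · have h1 : t₀.card + t₁.card = t.card := by
        rw [ht₀, ht₁]
        exact Finset.card_filter_add_card_filter_not _
      have h2 : t.card = s.card - 1 := by rw [ht]; exact Finset.card_erase_of_mem hv
      have h3 : 1 ≤ s.card := Finset.card_pos.mpr ⟨v, hv⟩
      rw [hcard1] at happ
      omega
    · intro w hw
      rcases Finset.mem_image.mp hw with ⟨x, hx', rfl⟩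
      have hx := hmem_t₁ x hx'
      intro h
      apply hx.2
      have : (f x : E) = 0 := by rw [h]; rfl
      simpa [hf] using this
    · intro w hw u hu hwu
      rcases Finset.mem_image.mp hw with ⟨x, hx', rfl⟩
      rcases Finset.mem_image.mp hu with ⟨y, hy', rfl⟩
      have hx := hmem_t₁ x hx'
      have hy := hmem_t₁ y hy'
      have hxy : x ≠ y := by rintro rfl; exact hwu rfl
      have h1 : inner (𝕜 := ℝ) x y ≤ 0 := hneg x hx.1.2 y hy.1.2 hxy
      have h2 : 0 ≤ c x * c y := by
        have := hcle x hx.1.2 hx.1.1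
        have := hcle y hy.1.2 hy.1.1
        nlinarith
      have h3 : 0 ≤ c x * c y * inner (𝕜 := ℝ) v v := mul_nonneg h2 hvsq.le
      rw [hinner]
      linarith


lemma mult_bound {N M : ℕ} {ε : ℝ} (hε : 0 < ε) (a : Fin M → EuclideanSpace ℝ (Fin N))
    (hinj : Function.Injective a) (hsep : ∀ i j, i ≠ j → 2 * ε ≤ dist (a i) (a j))
    (x : EuclideanSpace ℝ (Fin N)) :
    (Finset.univ.filter (fun i => dist x (a i) ≤ Real.sqrt 2 * ε)).card ≤ 2 * N + 1 := by
  classical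
  set I := Finset.univ.filter (fun i : Fin M => dist x (a i) ≤ Real.sqrt 2 * ε) with hI
  set g : Fin M → EuclideanSpace ℝ (Fin N) := fun i => a i - x with hg
  have hginj : Function.Injective g := fun i j h => hinj (by
    have : a i - x = a j - x := h
    linear_combination (norm := abel_nf) this)
  have hcard : (I.image g).card = I.card := Finset.card_image_of_injective _ hginj
  set s := (I.image g).erase 0 with hs
  have hkey : ∀ u ∈ I.image g, ∀ w ∈ I.image g, u ≠ w → inner (𝕜 := ℝ) u w ≤ 0 := by
    intro u hu w hw huw
    rcases Finset.mem_image.mp hu with ⟨i, hi, rfl⟩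
    rcases Finset.mem_image.mp hw with ⟨j, hj, rfl⟩
    have hij : i ≠ j := fun h => huw (by rw [h])
    have h1 : ‖g i‖ ≤ Real.sqrt 2 * ε := by
      rw [hg]
      simpa [dist_eq_norm, norm_sub_rev] using (Finset.mem_filter.mp hi).2
    have h2 : ‖g j‖ ≤ Real.sqrt 2 * ε := by
      rw [hg]
      simpa [dist_eq_norm, norm_sub_rev] using (Finset.mem_filter.mp hj).2
    have h3 : 2 * ε ≤ ‖g i - g j‖ := by
      have : g i - g j = a i - a j := by rw [hg]; simp only [sub_sub_sub_cancel_right]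
      rw [this, ← dist_eq_norm]
      exact hsep i j hij
    have hsq : (Real.sqrt 2 * ε) ^ 2 = 2 * ε ^ 2 := by
      rw [mul_pow, Real.sq_sqrt (by norm_num : (2:ℝ) ≥ 0)]
    have hnorm : ‖g i - g j‖ ^ 2 = ‖g i‖ ^ 2 - 2 * inner (𝕜 := ℝ) (g i) (g j) + ‖g j‖ ^ 2 :=
      norm_sub_sq_real (g i) (g j)
    have hgi : ‖g i‖ ^ 2 ≤ 2 * ε ^ 2 := by
      rw [← hsq]
      exact pow_le_pow_left₀ (norm_nonneg _) h1 2
    have hgj : ‖g j‖ ^ 2 ≤ 2 * ε ^ 2 := by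
      rw [← hsq]
      exact pow_le_pow_left₀ (norm_nonneg _) h2 2
    have hdistsq : (2 * ε) ^ 2 ≤ ‖g i - g j‖ ^ 2 :=
      pow_le_pow_left₀ (by positivity) h3 2
    nlinarith
  have hscard : s.card ≤ 2 * N := by
    apply obtuse_card N (EuclideanSpace ℝ (Fin N)) (finrank_euclideanSpace_fin)
    · intro v hv
      exact (Finset.mem_erase.mp hv).1
    · intro v hv w hw hvw
      exact hkey v (Finset.mem_erase.mp hv).2 w (Finset.mem_erase.mp hw).2 hvw
  have herase : (I.image g).card ≤ s.card + 1 := by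
    rw [hs]
    by_cases h0 : (0 : EuclideanSpace ℝ (Fin N)) ∈ I.image g
    · rw [Finset.card_erase_of_mem h0]
      have : 1 ≤ (I.image g).card := Finset.card_pos.mpr ⟨0, h0⟩
      omega
    · rw [Finset.erase_eq_of_notMem h0]
      omega
  omega
  

lemma upper_count {N M : ℕ} {R ε : ℝ} (hR : 0 < R) (hε : 0 < ε)
    (a : Fin M → EuclideanSpace ℝ (Fin N))
    (hinj : Function.Injective a)
    (hball : ∀ i, a i ∈ closedBall (0 : EuclideanSpace ℝ (Fin N)) R)
    (hsep : ∀ i j, i ≠ j → 2 * ε ≤ dist (a i) (a j)) :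
    (M : ℝ) * (Real.sqrt 2 * ε) ^ N ≤ (2 * N + 1) * (R + Real.sqrt 2 * ε) ^ N := by
  classical
  set sR : ℝ := Real.sqrt 2 * ε with hsR
  have hsRpos : 0 < sR := by positivity
  set B : Fin M → Set (EuclideanSpace ℝ (Fin N)) := fun i => closedBall (a i) sR with hB
  have hBmeas : ∀ i, MeasurableSet (B i) := fun i => measurableSet_closedBall
  set Big : Set (EuclideanSpace ℝ (Fin N)) := closedBall 0 (R + sR) with hBig
  -- pointwise bound
  have hpt : ∀ x : EuclideanSpace ℝ (Fin N), (∑ i, (B i).indicator (fun _ => (1 : ℝ≥0∞)) x)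
      ≤ Big.indicator (fun _ => ((2 * N + 1 : ℕ) : ℝ≥0∞)) x := by
    intro x
    by_cases hx : x ∈ Big
    · rw [Set.indicator_of_mem hx]
      have : (∑ i, (B i).indicator (fun _ => (1 : ℝ≥0∞)) x)
          = ((Finset.univ.filter (fun i : Fin M => dist x (a i) ≤ sR)).card : ℝ≥0∞) := by
        rw [Finset.card_eq_sum_ones, Nat.cast_sum]
        rw [Finset.sum_filter]
        apply Finset.sum_congr rfl
        intro i _
        by_cases h : dist x (a i) ≤ sR
        · rw [if_pos h, Set.indicator_of_mem (by rwa [hB, mem_closedBall])]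
          simp
        · rw [if_neg h, Set.indicator_of_notMem (by rwa [hB, mem_closedBall])]
      rw [this]
      exact_mod_cast Nat.cast_le.mpr (mult_bound hε a hinj hsep x)
    · rw [Set.indicator_of_notMem hx]
      have : ∀ i, (B i).indicator (fun _ => (1 : ℝ≥0∞)) x = 0 := by
        intro i
        apply Set.indicator_of_notMem
        intro hxB
        apply hx
        rw [hBig, mem_closedBall]
        calc dist x 0 ≤ dist x (a i) + dist (a i) 0 := dist_triangle _ _ _
          _ ≤ sR + R := add_le_add (by rwa [hB, mem_closedBall] at hxB)
              (by simpa [mem_closedBall] using hball i)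
          _ = R + sR := by ring
      simp [this]
  -- sum of measures
  have hsum : (∑ i, volume (B i)) ≤ ((2 * N + 1 : ℕ) : ℝ≥0∞) * volume Big := by
    have h1 : ∀ i, volume (B i) = ∫⁻ x, (B i).indicator (fun _ => (1 : ℝ≥0∞)) x  := by
      intro i
      exact (lintegral_indicator_one (hBmeas i)).symm
    calc (∑ i, volume (B i)) = ∫⁻ x, (∑ i, (B i).indicator (fun _ => (1 : ℝ≥0∞)) x)  := by
          rw [lintegral_finset_sum]
          · exact Finset.sum_congr rfl fun i _ => h1 i
          · exact fun i _ => (measurable_const.indicator (hBmeas i))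
      _ ≤ ∫⁻ x, Big.indicator (fun _ => ((2 * N + 1 : ℕ) : ℝ≥0∞)) x  := lintegral_mono hpt
      _ = ((2 * N + 1 : ℕ) : ℝ≥0∞) * volume Big := by
          rw [lintegral_indicator_const measurableSet_closedBall]
  -- compute measures via Haar
  have hfr : finrank ℝ (EuclideanSpace ℝ (Fin N)) = N := finrank_euclideanSpace_fin
  have hBi : ∀ i, volume (B i) = ENNReal.ofReal (sR ^ N) * volume (ball (0 : EuclideanSpace ℝ (Fin N)) 1) := by
    intro i
    rw [hB]
    rw [Measure.addHaar_closedBall volume (a i) hsRpos.le, hfr]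
  have hBigm : volume Big = ENNReal.ofReal ((R + sR) ^ N) * volume (ball (0 : EuclideanSpace ℝ (Fin N)) 1) := by
    rw [hBig, Measure.addHaar_closedBall volume 0 (by positivity), hfr]
  rw [Finset.sum_congr rfl (fun i _ => hBi i), Finset.sum_const, Finset.card_univ,
    Fintype.card_fin, hBigm] at hsum
  have hμ1pos : volume (ball (0 : EuclideanSpace ℝ (Fin N)) 1) ≠ 0 :=
    (measure_ball_pos volume 0 one_pos).ne'
  have hμ1top : volume (ball (0 : EuclideanSpace ℝ (Fin N)) 1) ≠ ⊤ := measure_ball_lt_top.ne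
  have hmain : (M : ℝ≥0∞) * ENNReal.ofReal (sR ^ N)
      ≤ ((2 * N + 1 : ℕ) : ℝ≥0∞) * ENNReal.ofReal ((R + sR) ^ N) := by
    rw [← ENNReal.mul_le_mul_iff_left hμ1pos hμ1top]
    calc (M : ℝ≥0∞) * ENNReal.ofReal (sR ^ N) * volume (ball (0 : EuclideanSpace ℝ (Fin N)) 1)
        = M • (ENNReal.ofReal (sR ^ N) * volume (ball (0 : EuclideanSpace ℝ (Fin N)) 1)) := by
          rw [nsmul_eq_mul, mul_assoc]
      _ ≤ ((2 * N + 1 : ℕ) : ℝ≥0∞) * (ENNReal.ofReal ((R + sR) ^ N) * volume (ball (0 : EuclideanSpace ℝ (Fin N)) 1)) := hsum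
      _ = _ := by rw [mul_assoc]
  have hreal : (M : ℝ) * sR ^ N ≤ (2 * (N:ℝ) + 1) * (R + sR) ^ N := by
    rw [← ENNReal.ofReal_le_ofReal_iff (by positivity)]
    calc ENNReal.ofReal ((M : ℝ) * sR ^ N)
        = (M : ℝ≥0∞) * ENNReal.ofReal (sR ^ N) := by
          rw [ENNReal.ofReal_mul (by positivity), ENNReal.ofReal_natCast]
      _ ≤ ((2 * N + 1 : ℕ) : ℝ≥0∞) * ENNReal.ofReal ((R + sR) ^ N) := hmain
      _ = ENNReal.ofReal ((2 * (N:ℝ) + 1 : ℝ) * (R + sR) ^ N) := by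
          rw [ENNReal.ofReal_mul (by positivity), ← ENNReal.ofReal_natCast]
          congr 1
          push_cast
          ring
  exact hreal

lemma lower_count {N M : ℕ} {R ε : ℝ} (hR : 0 < R) (hε : 0 < ε)
    (a : Fin M → EuclideanSpace ℝ (Fin N))
    (hcov : ∀ x ∈ closedBall (0 : EuclideanSpace ℝ (Fin N)) R, ∃ i, dist x (a i) ≤ 2 * ε) :
    R ^ N ≤ (M : ℝ) * (2 * ε) ^ N := by
  classical
  have hsub : closedBall (0 : EuclideanSpace ℝ (Fin N)) R ⊆ ⋃ i, closedBall (a i) (2 * ε) := by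
    intro x hx
    rcases hcov x hx with ⟨i, hi⟩
    exact Set.mem_iUnion.mpr ⟨i, mem_closedBall.mpr hi⟩
  have hfr : finrank ℝ (EuclideanSpace ℝ (Fin N)) = N := finrank_euclideanSpace_fin
  have h1 : volume (closedBall (0 : EuclideanSpace ℝ (Fin N)) R)
      ≤ ∑ i, volume (closedBall (a i) (2 * ε)) :=
    (measure_mono hsub).trans (measure_iUnion_fintype_le _ _)
  rw [Measure.addHaar_closedBall volume _ hR.le, hfr] at h1
  have h2 : ∀ i : Fin M, volume (closedBall (a i) (2 * ε))
      = ENNReal.ofReal ((2 * ε) ^ N) * volume (ball (0 : EuclideanSpace ℝ (Fin N)) 1) := by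
    intro i
    rw [Measure.addHaar_closedBall volume _ (by positivity), hfr]
  rw [Finset.sum_congr rfl (fun i _ => h2 i), Finset.sum_const, Finset.card_univ,
    Fintype.card_fin, nsmul_eq_mul] at h1
  have hμ1pos : volume (ball (0 : EuclideanSpace ℝ (Fin N)) 1) ≠ 0 :=
    (measure_ball_pos volume 0 one_pos).ne'
  have hμ1top : volume (ball (0 : EuclideanSpace ℝ (Fin N)) 1) ≠ ⊤ := measure_ball_lt_top.ne
  rw [← mul_assoc] at h1
  have hmain : ENNReal.ofReal (R ^ N) ≤ (M : ℝ≥0∞) * ENNReal.ofReal ((2 * ε) ^ N) :=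
    (ENNReal.mul_le_mul_iff_left hμ1pos hμ1top).mp h1
  rw [← ENNReal.ofReal_le_ofReal_iff (by positivity)]
  calc ENNReal.ofReal (R ^ N) ≤ (M : ℝ≥0∞) * ENNReal.ofReal ((2 * ε) ^ N) := hmain
    _ = ENNReal.ofReal ((M : ℝ) * (2 * ε) ^ N) := by
        rw [ENNReal.ofReal_mul (by positivity), ENNReal.ofReal_natCast]

/-- `M_N`: the maximal cardinality of a subset of the closed ball of radius `R` in `ℝᴺ`
whose distinct points are at pairwise Euclidean distance at least `2ε`, so that `log₂ M_N`
is the Kolmogorov `2ε`-capacity of the ball. -/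
noncomputable def maxSep (R ε : ℝ) (N : ℕ) : ℕ :=
  sSup {M : ℕ | ∃ a : Fin M → EuclideanSpace ℝ (Fin N), Function.Injective a ∧
    (∀ i, a i ∈ closedBall (0 : EuclideanSpace ℝ (Fin N)) R) ∧
    ∀ i j, i ≠ j → 2 * ε ≤ dist (a i) (a j)}


section maxSepLemmas

variable {R ε : ℝ} {N : ℕ}

lemma sep_bddAbove (hR : 0 < R) (hε : 0 < ε) (N : ℕ) : BddAbove {M : ℕ | ∃ a : Fin M → EuclideanSpace ℝ (Fin N),
    Function.Injective a ∧
    (∀ i, a i ∈ closedBall (0 : EuclideanSpace ℝ (Fin N)) R) ∧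
    ∀ i j, i ≠ j → 2 * ε ≤ dist (a i) (a j)} := by
  refine ⟨Nat.floor (((2 * N + 1 : ℝ) * (R + Real.sqrt 2 * ε) ^ N) / (Real.sqrt 2 * ε) ^ N),
    fun M hM => ?_⟩
  rcases hM with ⟨a, hinj, hball, hsep⟩
  have h := upper_count hR hε a hinj hball hsep
  have hspos : (0:ℝ) < (Real.sqrt 2 * ε) ^ N := by positivity
  apply Nat.le_floor
  rw [le_div_iff₀ hspos]
  exact h

lemma one_mem_sep (hR : 0 < R) (N : ℕ) : 1 ∈ {M : ℕ | ∃ a : Fin M → EuclideanSpace ℝ (Fin N),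
    Function.Injective a ∧
    (∀ i, a i ∈ closedBall (0 : EuclideanSpace ℝ (Fin N)) R) ∧
    ∀ i j, i ≠ j → 2 * ε ≤ dist (a i) (a j)} := by
  refine ⟨fun _ => 0, fun i j _ => Subsingleton.elim i j, fun i => ?_, fun i j hij => ?_⟩
  · simpa [mem_closedBall] using hR.le
  · exact absurd (Subsingleton.elim i j) hij

lemma maxSep_mem (hR : 0 < R) (hε : 0 < ε) (N : ℕ) : maxSep R ε N ∈ {M : ℕ | ∃ a : Fin M → EuclideanSpace ℝ (Fin N),
    Function.Injective a ∧
    (∀ i, a i ∈ closedBall (0 : EuclideanSpace ℝ (Fin N)) R) ∧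
    ∀ i j, i ≠ j → 2 * ε ≤ dist (a i) (a j)} :=
  Nat.sSup_mem ⟨1, one_mem_sep hR N⟩ (sep_bddAbove hR hε N)

lemma maxSep_pos (hR : 0 < R) (hε : 0 < ε) (N : ℕ) : 1 ≤ maxSep R ε N :=
  le_csSup (sep_bddAbove hR hε N) (one_mem_sep hR N)

lemma maxSep_ub (hR : 0 < R) (hε : 0 < ε) (N : ℕ) : (maxSep R ε N : ℝ) * (Real.sqrt 2 * ε) ^ N
    ≤ (2 * N + 1) * (R + Real.sqrt 2 * ε) ^ N := by
  rcases maxSep_mem hR hε N with ⟨a, hinj, hball, hsep⟩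
  exact upper_count hR hε a hinj hball hsep

lemma maxSep_lb (hR : 0 < R) (hε : 0 < ε) (N : ℕ) : R ^ N ≤ (maxSep R ε N : ℝ) * (2 * ε) ^ N := by
  classical
  rcases maxSep_mem hR hε N with ⟨a, hinj, hball, hsep⟩
  apply lower_count hR hε a
  intro x hx
  by_contra hcon
  push_neg at hcon
  -- extend the family by x
  obtain ⟨b, hbx, hba⟩ : ∃ b : Fin (maxSep R ε N + 1) → EuclideanSpace ℝ (Fin N),
      b (Fin.last _) = x ∧ ∀ i, b (Fin.castSucc i) = a i :=
    ⟨Fin.snoc a x, by simp, fun i => by simp⟩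
  have hxai : ∀ i, x ≠ a i := by
    intro i h
    have := hcon i
    rw [← h] at this
    simp at this
    linarith
  have hmem : maxSep R ε N + 1 ∈ {M : ℕ | ∃ a : Fin M → EuclideanSpace ℝ (Fin N),
      Function.Injective a ∧
      (∀ i, a i ∈ closedBall (0 : EuclideanSpace ℝ (Fin N)) R) ∧
      ∀ i j, i ≠ j → 2 * ε ≤ dist (a i) (a j)} := by
    refine ⟨b, ?_, ?_, ?_⟩
    · intro i j hij
      induction i using Fin.lastCases with
      | last =>
        induction j using Fin.lastCases with
        | last => rfl
        | cast j =>
          rw [hbx, hba] at hij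
          exact absurd hij (hxai j)
      | cast i =>
        induction j using Fin.lastCases with
        | last =>
          rw [hbx, hba] at hij
          exact absurd hij.symm (hxai i)
        | cast j =>
          rw [hba, hba] at hij
          rw [hinj hij]
    · intro i
      induction i using Fin.lastCases with
      | last => rw [hbx]; exact hx
      | cast i => rw [hba]; exact hball i
    · intro i j hij
      induction i using Fin.lastCases with
      | last =>
        induction j using Fin.lastCases with
        | last => exact absurd rfl hij
        | cast j =>
          rw [hbx, hba]
          exact (hcon j).le
      | cast i =>
        induction j using Fin.lastCases with
        | last =>
          rw [hbx, hba, dist_comm]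
          exact (hcon i).le
        | cast j =>
          rw [hba, hba]
          apply hsep
          intro h; apply hij; rw [h]
  have : maxSep R ε N + 1 ≤ maxSep R ε N := le_csSup (sep_bddAbove hR hε N) hmem
  omega

end maxSepLemmas

/-- Euclidean-ball asymptotic form of Theorem 1: for `R, ε > 0`,
`liminf (log₂ M_N)/N ≥ log₂(R/ε) − 1` and `limsup (log₂ M_N)/N ≤ log₂(1 + R/(√2·ε))`. -/
theorem two_eps_capacity_per_dof (R ε : ℝ) (hR : 0 < R) (hε : 0 < ε) :
    Real.logb 2 (R / ε) - 1 ≤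
      atTop.liminf (fun N : ℕ => Real.logb 2 (maxSep R ε N) / (N : ℝ)) ∧
    atTop.limsup (fun N : ℕ => Real.logb 2 (maxSep R ε N) / (N : ℝ)) ≤
      Real.logb 2 (1 + R / (Real.sqrt 2 * ε)) := by
  have hs2 : (0:ℝ) < Real.sqrt 2 := Real.sqrt_pos.mpr two_pos
  set s : ℝ := Real.sqrt 2 * ε with hsdef
  have hspos : 0 < s := by positivity
  set q : ℝ := 1 + R / s with hqdef
  have hq1 : 1 < q := by
    rw [hqdef]
    have : 0 < R / s := by positivity
    linarith
  have hqeq : (R + s) / s = q := by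
    rw [hqdef]; field_simp; ring
  set f : ℕ → ℝ := fun N => Real.logb 2 (maxSep R ε N) / (N : ℝ) with hfdef
  set g : ℕ → ℝ := fun N => Real.logb 2 (2 * N + 1) / (N : ℝ) + Real.logb 2 q with hgdef
  -- f ≤ g eventually
  have hfg : ∀ᶠ N : ℕ in atTop, f N ≤ g N := by
    filter_upwards [eventually_ge_atTop 1] with N hN
    have hNpos : (0:ℝ) < N := by exact_mod_cast hN
    have hM1 : 1 ≤ (maxSep R ε N : ℝ) := by exact_mod_cast maxSep_pos hR hε N
    have hub := maxSep_ub hR hε N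
    have hub' : (maxSep R ε N : ℝ) ≤ (2 * N + 1) * q ^ N := by
      rw [← hqeq, div_pow]
      rw [mul_div_assoc'] at *
      rw [le_div_iff₀ (by positivity)]
      exact hub
    have h1 : Real.logb 2 (maxSep R ε N) ≤ Real.logb 2 ((2 * N + 1) * q ^ N) :=
      Real.logb_le_logb_of_le one_lt_two (by linarith) hub'
    rw [Real.logb_mul (by positivity) (by positivity), Real.logb_pow] at h1
    rw [hfdef, hgdef]
    simp only []
    rw [div_le_iff₀ hNpos]
    have hq0 : (0:ℝ) ≤ Real.logb 2 q := Real.logb_nonneg one_lt_two hq1.le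
    calc Real.logb 2 (maxSep R ε N) ≤ Real.logb 2 (2 * N + 1) + N * Real.logb 2 q := h1
      _ = (Real.logb 2 (2 * N + 1) / N + Real.logb 2 q) * N := by field_simp
  -- g tends to logb 2 q
  have hg : Tendsto g atTop (𝓝 (Real.logb 2 q)) := by
    have hreal : Tendsto (fun x : ℝ => Real.log x ^ 1 / ((1/2) * x + (-(1/2)))) atTop (𝓝 0) :=
      Real.tendsto_pow_log_div_mul_add_atTop (1/2) (-(1/2)) 1 (by norm_num)
    have hcomp : Tendsto (fun N : ℕ => (2 * (N:ℝ) + 1)) atTop atTop := by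
      apply tendsto_atTop_add_const_right
      exact (tendsto_natCast_atTop_atTop).const_mul_atTop two_pos
    have h0' : Tendsto (fun N : ℕ => Real.log (2 * N + 1) / N) atTop (𝓝 0) := by
      refine (hreal.comp hcomp).congr (fun N => ?_)
      simp only [Function.comp]
      rw [pow_one]
      congr 1
      ring
    have h0 : Tendsto (fun N : ℕ => Real.logb 2 (2 * N + 1) / N) atTop (𝓝 0) := by
      have := h0'.div_const (Real.log 2)
      rw [zero_div] at this
      refine this.congr (fun N => ?_)
      rw [Real.logb]
      ring
    have := h0.add_const (Real.logb 2 q)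
    rw [zero_add] at this
    exact this
  -- nonnegativity of f eventually
  have hf0 : ∀ᶠ N : ℕ in atTop, 0 ≤ f N := by
    filter_upwards [eventually_ge_atTop 1] with N hN
    have hNpos : (0:ℝ) < N := by exact_mod_cast hN
    have hM1 : 1 ≤ (maxSep R ε N : ℝ) := by exact_mod_cast maxSep_pos hR hε N
    exact div_nonneg (Real.logb_nonneg one_lt_two hM1) hNpos.le
  constructor
  · -- liminf lower bound
    have hev : ∀ᶠ N : ℕ in atTop, Real.logb 2 (R / ε) - 1 ≤ f N := by
      filter_upwards [eventually_ge_atTop 1] with N hN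
      have hNpos : (0:ℝ) < N := by exact_mod_cast hN
      have hM1 : 1 ≤ (maxSep R ε N : ℝ) := by exact_mod_cast maxSep_pos hR hε N
      have hlb := maxSep_lb hR hε N
      have h1 : Real.logb 2 (R ^ N) ≤ Real.logb 2 ((maxSep R ε N : ℝ) * (2 * ε) ^ N) :=
        Real.logb_le_logb_of_le one_lt_two (by positivity) hlb
      rw [Real.logb_pow, Real.logb_mul (by positivity) (by positivity), Real.logb_pow] at h1
      have h2 : Real.logb 2 (2 * ε) = 1 + Real.logb 2 ε := by
        rw [Real.logb_mul two_ne_zero (ne_of_gt hε), Real.logb_self_eq_one one_lt_two]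
      have h3 : Real.logb 2 (R / ε) = Real.logb 2 R - Real.logb 2 ε :=
        Real.logb_div (ne_of_gt hR) (ne_of_gt hε)
      rw [hfdef]
      simp only []
      rw [le_div_iff₀ hNpos]
      nlinarith [h1, h2, h3]
    -- coboundedness: f is eventually bounded above
    have hgb : ∀ᶠ N : ℕ in atTop, g N ≤ Real.logb 2 q + 1 :=
      hg.eventually (eventually_le_nhds (lt_add_one _))
    have hfb : ∀ᶠ N : ℕ in atTop, f N ≤ Real.logb 2 q + 1 := by
      filter_upwards [hfg, hgb] with N h1 h2 using h1.trans h2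
    exact le_liminf_of_le (isCoboundedUnder_ge_of_eventually_le atTop hfb) hev
  · -- limsup upper bound
    have h1 : atTop.limsup f ≤ atTop.limsup g :=
      limsup_le_limsup hfg (isCoboundedUnder_le_of_eventually_le atTop hf0)
        hg.isBoundedUnder_le
    rw [hg.limsup_eq] at h1
    exact h1
end
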